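/- arXiv:1805.09690 — 6 statements merged into one kernel-verified Lean document; each statement's English description precedes it below -/
import Mathlib

section
/- Let H be a countable Abelian group. Then H can be represented in the form H = N × M, where M is a free Abelian group and N is a subgroup that has no free factor-groups (i.e., admits no nontrivial free quotient group). Moreover, the subgroup N is uniquely determined by H. -/
open Module Submodule

section Helpers

variable {X Y : Type*} [AddCommGroup X] [AddCommGroup Y]

/-- Transfer `Module.Free ℤ` across any two `ℤ`-module structures. -/
theorem free_int_transfer (i1 i2 : Module ℤ X) (h : @Module.Free ℤ X _ _ i1) :
    @Module.Free ℤ X _ _ i2 := by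
  haveI : Unique (Module ℤ X) := AddCommGroup.uniqueIntModule
  rwa [Subsingleton.elim i2 i1]

theorem free_int_of_addEquiv {iX : Module ℤ X} {iY : Module ℤ Y}
    (e : X ≃+ Y) (h : @Module.Free ℤ X _ _ iX) : @Module.Free ℤ Y _ _ iY :=
  free_int_transfer (AddCommGroup.toIntModule Y) iY
    (@Module.Free.of_equiv' ℤ Y _ _ (AddCommGroup.toIntModule Y) X _
      (AddCommGroup.toIntModule X)
      (free_int_transfer iX (AddCommGroup.toIntModule X) h)
      (@AddEquiv.toIntLinearEquiv X Y _ _ (AddCommGroup.toIntModule X)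
        (AddCommGroup.toIntModule Y) e))

end Helpers

section Specker

variable {G : Type*} [AddCommGroup G]

/-- The pure closure of a submodule. -/
def pureClosure (S : Submodule ℤ G) : Submodule ℤ G where
  carrier := {g | ∃ k : ℤ, k ≠ 0 ∧ k • g ∈ S}
  zero_mem' := ⟨1, one_ne_zero, by simp⟩
  add_mem' := by
    rintro a b ⟨k, hk, hka⟩ ⟨l, hl, hlb⟩
    refine ⟨k * l, mul_ne_zero hk hl, ?_⟩
    have : (k * l) • (a + b) = l • (k • a) + k • (l • b) := by
      rw [smul_add, smul_smul, smul_smul, mul_comm l k]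
    rw [this]
    exact S.add_mem (S.smul_mem l hka) (S.smul_mem k hlb)
  smul_mem' := by
    rintro c a ⟨k, hk, hka⟩
    exact ⟨k, hk, by rw [smul_comm]; exact S.smul_mem c hka⟩

theorem mem_pureClosure {S : Submodule ℤ G} {g : G} :
    g ∈ pureClosure S ↔ ∃ k : ℤ, k ≠ 0 ∧ k • g ∈ S := Iff.rfl

theorem le_pureClosure (S : Submodule ℤ G) : S ≤ pureClosure S :=
  fun g hg => ⟨1, one_ne_zero, by simpa using hg⟩

theorem pureClosure_mono {S T : Submodule ℤ G} (h : S ≤ T) :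
    pureClosure S ≤ pureClosure T := by
  rintro g ⟨k, hk, hkg⟩; exact ⟨k, hk, h hkg⟩

theorem smul_mem_pureClosure {S : Submodule ℤ G} {g : G} {k : ℤ} (hk : k ≠ 0)
    (h : k • g ∈ pureClosure S) : g ∈ pureClosure S := by
  obtain ⟨l, hl, hlg⟩ := h
  exact ⟨l * k, mul_ne_zero hl hk, by rwa [mul_smul]⟩

variable (hsep : ∀ g : G, g ≠ 0 → ∃ f : G →+ ℤ, f g ≠ 0)

include hsep in
theorem noZeroSMulDivisors_of_sep : NoZeroSMulDivisors ℤ G := by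
  refine ⟨fun {k g} h => ?_⟩
  by_contra hc
  push_neg at hc
  obtain ⟨hk, hg⟩ := hc
  obtain ⟨f, hf⟩ := hsep g hg
  have : f (k • g) = k • f g := map_zsmul f k g
  rw [h, map_zero] at this
  have : k * f g = 0 := by rw [← smul_eq_mul]; exact this.symm
  rcases mul_eq_zero.mp this with h' | h'
  · exact hk h'
  · exact hf h'

end Specker
section Specker2

open Module Submodule

variable {G : Type*} [AddCommGroup G]
variable (hsep : ∀ g : G, g ≠ 0 → ∃ f : G →+ ℤ, f g ≠ 0)

include hsep in
theorem pureClosure_free_finite (n : ℕ) (T : Fin n → G) :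
    Module.Free ℤ ↥(pureClosure (span ℤ (Set.range T))) ∧
    Module.Finite ℤ ↥(pureClosure (span ℤ (Set.range T))) := by
  haveI := noZeroSMulDivisors_of_sep hsep
  set P := pureClosure (span ℤ (Set.range T)) with hP
  -- the rational linear form associated to a hom
  set L : (G →+ ℤ) → ((Fin n → ℚ) →ₗ[ℚ] ℚ) :=
    fun h => ∑ i, (h (T i) : ℚ) • LinearMap.proj i with hL
  have hLapply : ∀ (h : G →+ ℤ) (lam : Fin n → ℚ),
      L h lam = ∑ i, (h (T i) : ℚ) * lam i := by
    intro h lam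
    simp [hL, LinearMap.sum_apply, LinearMap.smul_apply, smul_eq_mul]
  set V : Finset (G →+ ℤ) → Submodule ℚ (Fin n → ℚ) :=
    fun S => ⨅ h ∈ S, LinearMap.ker (L h) with hV
  -- choose S₀ of minimal finrank
  have hne : (Set.range fun S => Module.finrank ℚ (V S)).Nonempty := ⟨_, ⟨∅, rfl⟩⟩
  obtain ⟨S₀, hS₀⟩ := Nat.sInf_mem hne
  classical
  have hmin : ∀ S, Module.finrank ℚ (V S₀) ≤ Module.finrank ℚ (V S) :=
    fun S => le_trans (le_of_eq hS₀) (Nat.sInf_le ⟨S, rfl⟩)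
  -- key: V S₀ is contained in all kernels
  have key : ∀ h : G →+ ℤ, V S₀ ≤ LinearMap.ker (L h) := by
    intro h
    by_contra hc
    have hlt : V (insert h S₀) < V S₀ := by
      have hle : V (insert h S₀) ≤ V S₀ := by
        rw [hV]
        simp only [Finset.iInf_insert]
        exact inf_le_right
      refine lt_of_le_of_ne hle (fun he => hc ?_)
      rw [← he, hV]
      simp only [Finset.iInf_insert]
      exact inf_le_left
    have := Submodule.finrank_lt_finrank_of_lt hlt
    have := hmin (insert h S₀)
    omega
  -- injectivity of evaluation on P
  have hinjP : ∀ g ∈ P, (∀ h ∈ S₀, h g = 0) → g = 0 := by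
    intro g hg hg0
    obtain ⟨k, hk, hkg⟩ := hg
    obtain ⟨c, hc⟩ := (mem_span_range_iff_exists_fun ℤ).mp hkg
    have hsum : ∀ h : G →+ ℤ, (∑ i, c i * h (T i)) = h (k • g) := by
      intro h
      rw [← hc, map_sum]
      congr 1
      funext i
      rw [map_zsmul, smul_eq_mul]
    have hlam : (fun i => (c i : ℚ)) ∈ V S₀ := by
      rw [hV]
      simp only [Submodule.mem_iInf]
      intro h hh
      rw [LinearMap.mem_ker, hLapply]
      have : ((∑ i, c i * h (T i) : ℤ) : ℚ) = 0 := by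
        rw [hsum h, map_zsmul, hg0 h hh, smul_zero, Int.cast_zero]
      rw [← this]
      push_cast
      exact Finset.sum_congr rfl (fun i _ => mul_comm _ _)
    have hall : ∀ h : G →+ ℤ, h (k • g) = 0 := by
      intro h
      have := key h hlam
      rw [LinearMap.mem_ker, hLapply] at this
      have h2 : ((∑ i, c i * h (T i) : ℤ) : ℚ) = 0 := by
        rw [← this]
        push_cast
        exact Finset.sum_congr rfl (fun i _ => mul_comm _ _)
      have h3 : (∑ i, c i * h (T i)) = 0 := by exact_mod_cast h2
      rw [← hsum h, h3]
    have hkg0 : k • g = 0 := by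
      by_contra hne0
      obtain ⟨f, hf⟩ := hsep _ hne0
      exact hf (hall f)
    rcases smul_eq_zero.mp hkg0 with h' | h'
    · exact absurd h' hk
    · exact h'
  -- the embedding of P into a finite power of ℤ
  let ψ : ↥P →ₗ[ℤ] (↥(S₀ : Set (G →+ ℤ)) → ℤ) :=
    { toFun := fun x h => (h : G →+ ℤ) x.1
      map_add' := by intro x y; funext h; simp
      map_smul' := by
        intro k x
        funext h
        simp [map_zsmul] }
  have hinj : Function.Injective ψ := by
    intro x y hxy
    have hsub : ψ (x - y) = 0 := by rw [map_sub, hxy, sub_self]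
    have : (x - y : ↥P) = 0 := by
      have hmem : ((x - y : ↥P) : G) ∈ P := (x - y).2
      have h0 : ∀ h ∈ S₀, h ((x - y : ↥P) : G) = 0 := by
        intro h hh
        have := congrFun hsub ⟨h, hh⟩
        simpa [ψ] using this
      exact Subtype.ext (hinjP _ hmem h0)
    exact sub_eq_zero.mp this
  let e : ↥P ≃ₗ[ℤ] LinearMap.range ψ := LinearEquiv.ofInjective ψ hinj
  haveI : Module.Finite ℤ ↥(LinearMap.range ψ) :=
    Module.Finite.iff_fg.mpr (IsNoetherian.noetherian _)
  exact ⟨Module.Free.of_equiv' inferInstance e.symm, Module.Finite.equiv e.symm⟩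

end Specker2
section Specker3

open Module Submodule

theorem specker_free (G : Type*) [AddCommGroup G] [Countable G]
    (hsep : ∀ g : G, g ≠ 0 → ∃ f : G →+ ℤ, f g ≠ 0) : Module.Free ℤ G := by
  haveI := noZeroSMulDivisors_of_sep hsep
  obtain ⟨e, he⟩ := exists_surjective_nat G
  set Gn : ℕ → Submodule ℤ G :=
    fun n => pureClosure (span ℤ (Set.range (fun i : Fin n => e i))) with hGn
  have hmono : Monotone Gn := by
    intro n m hnm
    refine pureClosure_mono (span_mono ?_)
    rintro _ ⟨i, rfl⟩
    exact ⟨⟨i, lt_of_lt_of_le i.2 hnm⟩, rfl⟩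
  have hsup_top : ⨆ n, Gn n = ⊤ := by
    rw [eq_top_iff]
    intro g _
    obtain ⟨m, rfl⟩ := he g
    have : e m ∈ Gn (m + 1) :=
      le_pureClosure _ (subset_span ⟨⟨m, Nat.lt_succ_self m⟩, rfl⟩)
    exact (le_iSup Gn (m + 1)) this
  have hstep : ∀ n, ∃ C : Submodule ℤ G,
      Disjoint (Gn n) C ∧ Gn n ⊔ C = Gn (n + 1) ∧ Module.Free ℤ ↥C := by
    intro n
    have hAB : Gn n ≤ Gn (n + 1) := hmono (Nat.le_succ n)
    set B := Gn (n + 1) with hB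
    set A' : Submodule ℤ ↥B := (Gn n).comap B.subtype with hA'
    haveI : Module.Finite ℤ ↥B := (pureClosure_free_finite hsep _ _).2
    haveI : NoZeroSMulDivisors ℤ (↥B ⧸ A') := by
      constructor
      intro k x hkx
      by_cases hk : k = 0
      · exact Or.inl hk
      right
      obtain ⟨y, rfl⟩ := Submodule.Quotient.mk_surjective A' x
      rw [← Submodule.Quotient.mk_smul, Submodule.Quotient.mk_eq_zero] at hkx
      rw [Submodule.Quotient.mk_eq_zero]
      have h1 : (k • y : ↥B).1 ∈ Gn n := hkx
      have h2 : k • (y : G) ∈ Gn n := by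
        simpa using h1
      exact smul_mem_pureClosure hk h2
    obtain ⟨s, hs⟩ := Module.projective_lifting_property A'.mkQ LinearMap.id
      (Submodule.Quotient.mk_surjective A')
    have hsec : ∀ w, A'.mkQ (s w) = w := fun w => LinearMap.congr_fun hs w
    refine ⟨(LinearMap.range s).map B.subtype, ?_, ?_, ?_⟩
    · rw [Submodule.disjoint_def]
      rintro x hxA hxC
      obtain ⟨_, ⟨w, rfl⟩, rfl⟩ := hxC
      have hw : s w ∈ A' := hxA
      have : A'.mkQ (s w) = 0 := (Submodule.Quotient.mk_eq_zero A').mpr hw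
      rw [hsec] at this
      rw [this, map_zero]
      rfl
    · refine le_antisymm (sup_le hAB (Submodule.map_subtype_le _ _)) ?_
      intro b hb
      set bh : ↥B := ⟨b, hb⟩ with hbh
      set w := A'.mkQ bh with hw
      have h1 : bh - s w ∈ A' := by
        rw [← Submodule.Quotient.mk_eq_zero A']
        change A'.mkQ _ = 0
        rw [map_sub, hsec, sub_self]
      refine Submodule.mem_sup.mpr ⟨b - (s w : G), h1, (s w : G),
        ⟨s w, LinearMap.mem_range_self s w, rfl⟩, by abel⟩
    · have hinj : Function.Injective s := by
        intro a b hab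
        have : A'.mkQ (s a) = A'.mkQ (s b) := congrArg _ hab
        rwa [hsec, hsec] at this
      exact Module.Free.of_equiv'
        (Module.Free.of_equiv' inferInstance (LinearEquiv.ofInjective s hinj))
        (Submodule.equivMapOfInjective B.subtype (Submodule.injective_subtype B)
          (LinearMap.range s))
  choose C hCdisj hCsup hCfree using hstep
  have hCle : ∀ n, C n ≤ Gn (n + 1) := fun n => le_sup_right.trans (hCsup n).le
  -- ladder 1 : Gn k is disjoint from sups of C over Ico k K
  have lad1 : ∀ K k, ∀ x ∈ Gn k, x ∈ (⨆ m ∈ Finset.Ico k K, C m) → x = 0 := by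
    intro K
    induction K with
    | zero =>
      intro k x _ hx2
      rw [Finset.Ico_eq_empty (by omega)] at hx2
      simpa using hx2
    | succ K ih =>
      intro k x hx hx2
      by_cases hk : k ≤ K
      · rw [Nat.Ico_succ_right_eq_insert_Ico hk, Finset.iSup_insert] at hx2
        obtain ⟨z, hz, y, hy, hzy⟩ := Submodule.mem_sup.mp hx2
        have hyG : y ∈ Gn K := by
          have hle : (⨆ m ∈ Finset.Ico k K, C m) ≤ Gn K := by
            refine iSup₂_le fun m hm => ?_
            have hm' : m + 1 ≤ K := by
              rw [Finset.mem_Ico] at hm; omega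
            exact (hCle m).trans (hmono hm')
          exact hle hy
        have hzA : z ∈ Gn K := by
          have hz' : z = x - y := by rw [← hzy]; abel
          rw [hz']
          exact sub_mem (hmono hk hx) hyG
        have hz0 : z = 0 := by
          have := Submodule.disjoint_def.mp (hCdisj K)
          exact this z hzA hz
        rw [hz0, zero_add] at hzy
        exact ih k x hx (hzy ▸ hy)
      · rw [Finset.Ico_eq_empty (by omega)] at hx2
        simpa using hx2
  -- independence of the C n
  have hind : iSupIndep C := by
    rw [iSupIndep_def]
    intro n
    rw [Submodule.disjoint_def]
    intro x hx1 hx2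
    obtain ⟨s, hs⟩ := Submodule.mem_iSup_iff_exists_finset.mp hx2
    set K := s.sup id + 1 with hK
    have hle : (⨆ j ∈ s, ⨆ (_ : j ≠ n), C j) ≤
        (⨆ m ∈ Finset.Ico 0 n, C m) ⊔ (⨆ m ∈ Finset.Ico (n + 1) K, C m) := by
      refine iSup₂_le fun j hj => iSup_le fun hjn => ?_
      rcases lt_or_gt_of_ne hjn with h | h
      · exact le_trans (le_biSup C (Finset.mem_Ico.mpr ⟨Nat.zero_le _, h⟩)) le_sup_left
      · have hjK : j < K := by
          have := Finset.le_sup (f := id) hj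
          simp only [id] at this
          omega
        exact le_trans (le_biSup C (Finset.mem_Ico.mpr ⟨h, hjK⟩)) le_sup_right
    obtain ⟨y, hy, z, hz, hyz⟩ := Submodule.mem_sup.mp (hle hs)
    have hyG : y ∈ Gn n := by
      have hle' : (⨆ m ∈ Finset.Ico 0 n, C m) ≤ Gn n := by
        refine iSup₂_le fun m hm => ?_
        have hm' : m + 1 ≤ n := by rw [Finset.mem_Ico] at hm; omega
        exact (hCle m).trans (hmono hm')
      exact hle' hy
    have hzG : z ∈ Gn (n + 1) := by
      have hz' : z = x - y := by rw [← hyz]; abel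
      rw [hz']
      exact sub_mem (hCle n hx1) (hmono (Nat.le_succ n) hyG)
    have hz0 : z = 0 := lad1 K (n + 1) z hzG hz
    rw [hz0, add_zero] at hyz
    have hxG : x ∈ Gn n := hyz ▸ hyG
    exact Submodule.disjoint_def.mp (hCdisj n) x hxG hx1
  -- the C n fill up G
  have hG0 : Gn 0 = ⊥ := by
    rw [eq_bot_iff]
    rintro g ⟨k, hk, hkg⟩
    rw [show Set.range (fun i : Fin 0 => e ↑i) = ∅ from Set.range_eq_empty _,
      span_empty, Submodule.mem_bot] at hkg
    rcases smul_eq_zero.mp hkg with h | h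
    · exact absurd h hk
    · simpa using h
  have hCsup_top : ⨆ n, C n = ⊤ := by
    rw [eq_top_iff, ← hsup_top]
    refine iSup_le fun n => ?_
    induction n with
    | zero => rw [hG0]; exact bot_le
    | succ n ih =>
      rw [← hCsup n]
      exact sup_le ih (le_iSup C n)
  classical
  have hint : DirectSum.IsInternal C :=
    (DirectSum.isInternal_submodule_iff_iSupIndep_and_iSup_eq_top C).mpr ⟨hind, hCsup_top⟩
  exact Module.Free.of_basis
    (hint.collectedBasis (fun n => Module.Free.chooseBasis ℤ ↥(C n)))

end Specker3
section Stein

open Module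

/-- An abelian group `N` has no (nontrivial) free factor-groups: every quotient of `N`
which is a free abelian group (i.e. a free `ℤ`-module) is trivial. -/
def HasNoFreeQuotient (N : Type) [AddCommGroup N] : Prop :=
  ∀ K : AddSubgroup N, Module.Free ℤ (N ⧸ K) → Subsingleton (N ⧸ K)

/-- **K. Stein's theorem (Lemma 2).**  Every countable abelian group `H` is represented
in the form `H = N × M` (an internal direct sum of subgroups), where `M` is free and `N`
has no free factor-groups; the subgroup `N` is uniquely determined by `H`. -/
theorem stein_decomposition (H : Type) [AddCommGroup H] [Countable H] :
    ∃ N M : AddSubgroup H,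
      IsCompl N M ∧ Module.Free ℤ M ∧ HasNoFreeQuotient N ∧
      ∀ N' M' : AddSubgroup H,
        IsCompl N' M' → Module.Free ℤ M' → HasNoFreeQuotient N' → N' = N := by
  classical
  set N : AddSubgroup H := ⨅ f : H →+ ℤ, f.ker with hN
  have hmemN : ∀ x : H, x ∈ N ↔ ∀ f : H →+ ℤ, f x = 0 := by
    intro x
    simp [hN, AddSubgroup.mem_iInf, AddMonoidHom.mem_ker]
  set π : H →+ H ⧸ N := QuotientAddGroup.mk' N with hπ
  have hπker : ∀ x : H, π x = 0 ↔ x ∈ N := fun x => QuotientAddGroup.eq_zero_iff x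
  -- the quotient has separating functionals, hence is free by Specker's theorem
  have hsepQ : ∀ q : H ⧸ N, q ≠ 0 → ∃ f : (H ⧸ N) →+ ℤ, f q ≠ 0 := by
    intro q hq
    obtain ⟨x, rfl⟩ := QuotientAddGroup.mk'_surjective N q
    have hx : ¬ (∀ f : H →+ ℤ, f x = 0) := by
      intro hx
      exact hq ((hπker x).mpr ((hmemN x).mpr hx))
    push_neg at hx
    obtain ⟨f, hf⟩ := hx
    refine ⟨QuotientAddGroup.lift N f (fun y hy => (hmemN y).mp hy f), ?_⟩
    exact hf
  haveI : Countable (H ⧸ N) := Quotient.countable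
  haveI hQfree : Module.Free ℤ (H ⧸ N) := specker_free _ hsepQ
  -- split the quotient map
  obtain ⟨s, hs⟩ := Module.projective_lifting_property π.toIntLinearMap LinearMap.id
    (QuotientAddGroup.mk'_surjective N)
  have hsec : ∀ q, π (s q) = q := fun q => LinearMap.congr_fun hs q
  set M : AddSubgroup H := (s.toAddMonoidHom).range with hM
  have hmemM : ∀ x : H, x ∈ M ↔ ∃ q, s q = x := fun x => AddMonoidHom.mem_range
  have hcompl : IsCompl N M := by
    constructor
    · rw [AddSubgroup.disjoint_def]
      intro x hxN hxM
      obtain ⟨q, rfl⟩ := (hmemM x).mp hxM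
      have : q = 0 := by rw [← hsec q]; exact (hπker _).mpr hxN
      rw [this, map_zero]
    · rw [codisjoint_iff, AddSubgroup.eq_top_iff']
      intro x
      refine AddSubgroup.mem_sup.mpr ⟨x - s (π x), ?_, s (π x), (hmemM _).mpr ⟨π x, rfl⟩, by abel⟩
      rw [← hπker]
      rw [map_sub, hsec, sub_self]
  -- M is free
  have hMfree : Module.Free ℤ ↥M := by
    have e : (H ⧸ N) ≃+ ↥M :=
      { toFun := fun q => ⟨s q, (hmemM _).mpr ⟨q, rfl⟩⟩
        invFun := fun x => π x.1
        left_inv := hsec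
        right_inv := by
          rintro ⟨x, hx⟩
          obtain ⟨q, rfl⟩ := (hmemM x).mp hx
          refine Subtype.ext ?_
          show s (π (s q)) = s q
          rw [hsec]
        map_add' := fun a b => Subtype.ext (map_add s a b) }
    exact free_int_of_addEquiv e hQfree
  -- the projection onto N
  have hρmem : ∀ x : H, x - s (π x) ∈ N := by
    intro x
    rw [← hπker, map_sub, hsec, sub_self]
  set ρ : H →+ ↥N :=
    { toFun := fun x => ⟨x - s (π x), hρmem x⟩
      map_zero' := by simp
      map_add' := by
        intro a b
        refine Subtype.ext ?_
        simp only [map_add, AddSubgroup.coe_add]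
        abel } with hρ
  have hρN : ∀ x : ↥N, ρ x.1 = x := by
    rintro ⟨x, hx⟩
    refine Subtype.ext ?_
    have : π x = 0 := (hπker x).mpr hx
    simp [hρ, this]
  -- N has no free quotients
  have hNq : HasNoFreeQuotient ↥N := by
    intro K hK
    by_contra hns
    haveI := hK
    haveI : Nontrivial (↥N ⧸ K) := not_subsingleton_iff_nontrivial.mp hns
    set b := Module.Free.chooseBasis ℤ (↥N ⧸ K) with hb
    obtain ⟨i⟩ := b.index_nonempty
    obtain ⟨x0, hx0⟩ := QuotientAddGroup.mk'_surjective K (b i)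
    set φ : ↥N →+ ℤ := (b.coord i).toAddMonoidHom.comp (QuotientAddGroup.mk' K) with hφ
    have hφx0 : φ x0 = 1 := by
      rw [hφ, AddMonoidHom.comp_apply]
      simp [hx0, Basis.coord_apply, Basis.repr_self]
    set F : H →+ ℤ := φ.comp ρ with hF
    have h1 : F x0.1 = 1 := by rw [hF, AddMonoidHom.comp_apply, hρN, hφx0]
    have h0 : F x0.1 = 0 := (hmemN x0.1).mp x0.2 F
    rw [h0] at h1
    exact one_ne_zero h1.symm
  refine ⟨N, M, hcompl, hMfree, hNq, ?_⟩
  intro N' M' hc' hM'free hN'q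
  apply le_antisymm
  · -- N' ≤ N
    intro x hx
    rw [hmemN]
    intro f
    set g : ↥N' →+ ℤ := f.comp N'.subtype with hg
    have hfree : Module.Free ℤ (↥N' ⧸ g.ker) := by
      haveI : Module.Finite ℤ ↥(AddSubgroup.toIntSubmodule g.range) :=
        Module.Finite.iff_fg.mpr (IsNoetherian.noetherian _)
      have hfr : Module.Free ℤ ↥(AddSubgroup.toIntSubmodule g.range) := inferInstance
      exact free_int_of_addEquiv (QuotientAddGroup.quotientKerEquivRange g).symm hfr
    haveI := hN'q g.ker hfree
    have h0 : (QuotientAddGroup.mk' g.ker) ⟨x, hx⟩ = 0 := Subsingleton.elim _ _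
    have hxker : (⟨x, hx⟩ : ↥N') ∈ g.ker := (QuotientAddGroup.eq_zero_iff _).mp h0
    exact hxker
  · -- N ≤ N'
    intro x hxN
    have hx' : x ∈ N' ⊔ M' := by rw [hc'.codisjoint.eq_top]; trivial
    obtain ⟨y, hy, z, hz, hyzx⟩ := AddSubgroup.mem_sup.mp hx'
    suffices hz0 : z = 0 by
      rw [← hyzx, hz0, add_zero]; exact hy
    by_contra hz0
    haveI := hM'free
    set b := Module.Free.chooseBasis ℤ ↥M' with hb
    have hzb : b.repr ⟨z, hz⟩ ≠ 0 := by
      intro h0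
      apply hz0
      have hez : (⟨z, hz⟩ : ↥M') = 0 := by
        have := congrArg b.repr.symm h0
        simpa using this
      exact congrArg Subtype.val hez
    obtain ⟨i, hi⟩ := Finsupp.ne_iff.mp hzb
    set N'' := AddSubgroup.toIntSubmodule N' with hN''
    set M'' := AddSubgroup.toIntSubmodule M' with hM''
    have hc'' : IsCompl M'' N'' :=
      (OrderIso.isCompl AddSubgroup.toIntSubmodule hc').symm
    set pr := M''.linearProjOfIsCompl N'' hc'' with hpr
    set ι : ↥M'' →+ ↥M' :=
      { toFun := fun a => ⟨a.1, a.2⟩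
        map_zero' := rfl
        map_add' := fun a b => rfl } with hι
    set F : H →+ ℤ := ((b.coord i).toAddMonoidHom.comp ι).comp pr.toAddMonoidHom with hFdef
    have hyproj : pr y = 0 := Submodule.linearProjOfIsCompl_apply_right hc'' ⟨y, hy⟩
    have hzproj : pr z = ⟨z, hz⟩ := Submodule.linearProjOfIsCompl_apply_left hc'' ⟨z, hz⟩
    have hFx : F x = b.coord i ⟨z, hz⟩ := by
      rw [← hyzx]
      calc F (y + z) = b.coord i (ι (pr (y + z))) := rfl
        _ = b.coord i (ι (pr y + pr z)) := by rw [map_add]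
        _ = b.coord i (ι (⟨z, hz⟩ : ↥M'')) := by rw [hyproj, hzproj, zero_add]
        _ = b.coord i ⟨z, hz⟩ := rfl
    have hF0 : F x = 0 := (hmemN x).mp hxN F
    rw [hFx] at hF0
    refine hi ?_
    simpa [Basis.coord_apply] using hF0

end Stein
end

section
/- Let X be a topological Abelian group, B a Borel subgroup of X, and μ a distribution on X concentrated on B. If μ = μ_1 * μ_2, where μ_1, μ_2 are distributions on X, then the distributions μ_j can be replaced by their shifts μ'_j (i.e., μ'_j = μ_j * E_{x_j} for some x_j ∈ X) in such a manner that μ = μ'_1 * μ'_2 and both μ'_j are concentrated on B. -/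
open MeasureTheory
open scoped MeasureTheory ENNReal



lemma myAe_eq_one_of_lintegral {α : Type*} [MeasurableSpace α] (μ : Measure α)
    [IsProbabilityMeasure μ] {F : α → ℝ≥0∞} (hF : Measurable F) (hle : ∀ x, F x ≤ 1)
    (h : ∫⁻ x, F x ∂μ = 1) : ∀ᵐ x ∂μ, F x = 1 := by
  have h0 : ∫⁻ x, (1 - F x) ∂μ = 0 := by
    rw [lintegral_sub hF (by rw [h]; exact ENNReal.one_ne_top)
      (Filter.Eventually.of_forall hle), h, lintegral_one, measure_univ, tsub_self]
  have h1 := (lintegral_eq_zero_iff (measurable_const.sub hF)).mp h0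
  filter_upwards [h1] with x hx
  exact le_antisymm (hle x) (tsub_eq_zero_iff_le.mp hx)

lemma myAux {α : Type*} [MeasurableSpace α] [Add α] (μ ν : Measure α)
    [IsProbabilityMeasure μ] [IsProbabilityMeasure ν] {B : Set α} (hB : MeasurableSet B)
    (g : α × α → α) (hg : Measurable g)
    (hfg : ∀ᵐ p ∂μ.prod ν, p.1 + p.2 = g p)
    (h1 : (μ.prod ν) (g ⁻¹' B) = 1) :
    ∀ᵐ x ∂μ, ν {y | x + y ∈ B} = 1 := by
  have hmeas : MeasurableSet (g ⁻¹' B) := hg hB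
  have hint : ∫⁻ x, ν (Prod.mk x ⁻¹' (g ⁻¹' B)) ∂μ = 1 := by
    rw [← Measure.prod_apply hmeas]; exact h1
  have hFm : Measurable fun x => ν (Prod.mk x ⁻¹' (g ⁻¹' B)) :=
    measurable_measure_prodMk_left hmeas
  have hae := myAe_eq_one_of_lintegral μ hFm (fun _ => prob_le_one) hint
  have hae2 := Measure.ae_ae_of_ae_prod hfg
  filter_upwards [hae, hae2] with x hx1 hx2
  rw [← hx1]
  apply measure_congr
  filter_upwards [hx2] with y hy
  exact congrArg (· ∈ B) hy


lemma myConv_dirac {X : Type} [TopologicalSpace X] [AddCommGroup X] [IsTopologicalAddGroup X]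
    [MeasurableSpace X] [BorelSpace X] (μ : Measure X) [SFinite μ] (x : X) :
    μ ∗ Measure.dirac x = Measure.map (· + x) μ := by
  classical
  have hmx : Measurable fun a : X => a + x := (continuous_add_right x).measurable
  set h : X × X → X := fun p => if p.2 ∈ closure ({x} : Set X) then p.1 + p.2 else p.1 + x
    with hh
  have hhm : Measurable h := by
    intro B hBm
    have hpre : h ⁻¹' B = ((· + x) ⁻¹' B) ×ˢ (Set.univ : Set X) := by
      ext p
      simp only [Set.mem_preimage, Set.mem_prod, Set.mem_univ, and_true, hh]
      by_cases hp : p.2 ∈ closure ({x} : Set X)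
      · have hins0 : Inseparable p.2 x := by
          have hs : p.2 - x ∈ closure ({0} : Set X) := by
            have him := image_closure_subset_closure_image
              (f := fun a : X => a - x) (s := ({x} : Set X)) (by fun_prop)
            have : p.2 - x ∈ (fun a : X => a - x) '' closure ({x} : Set X) :=
              ⟨p.2, hp, rfl⟩
            simpa using him this
          have := (addGroup_inseparable_iff (x := p.2) (y := x)).mpr hs
          exact this
        have hins : Inseparable (p.1 + p.2) (p.1 + x) :=
          (Inseparable.refl p.1).add hins0
        simp [hp, hins.mem_measurableSet_iff hBm]
      · simp [hp]
    rw [hpre]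
    exact (hmx hBm).prod MeasurableSet.univ
  have hclosed : MeasurableSet (closure ({x} : Set X)) := isClosed_closure.measurableSet
  have hae : (fun p : X × X => p.1 + p.2) =ᵐ[μ.prod (Measure.dirac x)] h := by
    rw [Filter.EventuallyEq, ae_iff]
    have hnull : (μ.prod (Measure.dirac x)) (Set.univ ×ˢ (closure ({x} : Set X))ᶜ) = 0 := by
      rw [Measure.prod_prod]
      have : Measure.dirac x ((closure ({x} : Set X))ᶜ) = 0 := by
        rw [Measure.dirac_apply' _ hclosed.compl]
        simp [subset_closure (Set.mem_singleton x)]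
      simp [this]
    refine measure_mono_null (fun p hp => ?_) hnull
    simp only [Set.mem_setOf_eq] at hp
    refine ⟨Set.mem_univ _, fun hc => hp ?_⟩
    simp [hh, hc]
  calc μ ∗ Measure.dirac x
      = Measure.map (fun p : X × X => p.1 + p.2) (μ.prod (Measure.dirac x)) := rfl
    _ = Measure.map h (μ.prod (Measure.dirac x)) := Measure.map_congr hae
    _ = Measure.map h (Measure.map (fun a => (a, x)) μ) := by rw [Measure.prod_dirac]
    _ = Measure.map (h ∘ fun a => (a, x)) μ :=
        Measure.map_map hhm (measurable_id.prodMk measurable_const)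
    _ = Measure.map (· + x) μ := by
        congr 1
        funext a
        simp [hh, subset_closure (Set.mem_singleton x)]

/-- **Lemma 4.**  Let `X` be a topological Abelian group, `B` a Borel subgroup of `X`,
and `μ` a distribution on `X` concentrated on `B`.  If `μ = μ₁ * μ₂` (convolution) for
distributions `μ₁, μ₂` on `X`, then `μ₁, μ₂` can be replaced by shifts
`μ'ⱼ = μⱼ * E_{xⱼ}` so that `μ = μ'₁ * μ'₂` and both `μ'ⱼ` are concentrated on `B`. -/
theorem shift_factors_to_subgroup
    {X : Type} [TopologicalSpace X] [AddCommGroup X] [IsTopologicalAddGroup X]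
    [MeasurableSpace X] [BorelSpace X]
    (B : AddSubgroup X) (hB : MeasurableSet (B : Set X))
    (μ μ₁ μ₂ : Measure X)
    [IsProbabilityMeasure μ] [IsProbabilityMeasure μ₁] [IsProbabilityMeasure μ₂]
    (hμB : μ (B : Set X) = 1)
    (hconv : μ = μ₁ ∗ μ₂) :
    ∃ x₁ x₂ : X,
      μ = (μ₁ ∗ (Measure.dirac x₁)) ∗ (μ₂ ∗ (Measure.dirac x₂)) ∧
      (μ₁ ∗ (Measure.dirac x₁)) (B : Set X) = 1 ∧
      (μ₂ ∗ (Measure.dirac x₂)) (B : Set X) = 1 := by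
  set f : X × X → X := fun p => p.1 + p.2 with hfdef
  set ρ : Measure (X × X) := μ₁.prod μ₂ with hρdef
  have hconv' : μ = Measure.map f ρ := hconv
  have hfae : AEMeasurable f ρ := by
    by_contra hc
    have h0 : μ = 0 := by rw [hconv', Measure.map_of_not_aemeasurable hc]
    exact (IsProbabilityMeasure.ne_zero μ) h0
  obtain ⟨g, hg, hfg⟩ := hfae
  have hfg' : ∀ᵐ p ∂ρ, p.1 + p.2 = g p := hfg
  have h1 : ρ (g ⁻¹' B) = 1 := by
    have hmB : μ (B : Set X) = ρ (f ⁻¹' B) := by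
      rw [hconv']
      exact Measure.map_apply_of_aemeasurable ⟨g, hg, hfg⟩ hB
    have heq : ρ (f ⁻¹' B) = ρ (g ⁻¹' B) := by
      apply measure_congr
      filter_upwards [hfg'] with p hp
      exact congrArg (· ∈ (B : Set X)) hp
    rw [← heq, ← hmB, hμB]
  -- first marginal statement
  have e1 : ∀ᵐ a ∂μ₁, μ₂ {y | a + y ∈ (B : Set X)} = 1 := myAux μ₁ μ₂ hB g hg hfg' h1
  -- swapped versions
  have hswapcoe : (Prod.swap : X × X → X × X)
      = ⇑(MeasurableEquiv.prodComm (α := X) (β := X)) := rfl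
  have hswap : μ₂.prod μ₁ = Measure.map (⇑(MeasurableEquiv.prodComm (α := X) (β := X))) ρ := by
    rw [← hswapcoe, Measure.prod_swap]
  set g' : X × X → X := fun q => g q.swap with hg'def
  have hg' : Measurable g' := hg.comp measurable_swap
  have hfg2 : ∀ᵐ q ∂μ₂.prod μ₁, q.1 + q.2 = g' q := by
    rw [ae_iff, hswap, MeasurableEquiv.map_apply]
    have hsets : (MeasurableEquiv.prodComm (α := X) (β := X)) ⁻¹'
        {q : X × X | ¬ q.1 + q.2 = g' q} = {p : X × X | ¬ p.1 + p.2 = g p} := by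
      ext p
      simp only [Set.mem_preimage, Set.mem_setOf_eq, hg'def]
      rw [show ((MeasurableEquiv.prodComm (α := X) (β := X)) p) = p.swap from rfl]
      simp [add_comm]
    rw [hsets]
    exact hfg'
  have h1' : (μ₂.prod μ₁) (g' ⁻¹' B) = 1 := by
    rw [hswap, MeasurableEquiv.map_apply]
    have hsets : (MeasurableEquiv.prodComm (α := X) (β := X)) ⁻¹' (g' ⁻¹' B) = g ⁻¹' B := by
      ext p
      simp only [Set.mem_preimage, hg'def]
      rw [show ((MeasurableEquiv.prodComm (α := X) (β := X)) p) = p.swap from rfl]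
      simp
    rw [hsets]
    exact h1
  have e2 : ∀ᵐ y ∂μ₂, μ₁ {a | y + a ∈ (B : Set X)} = 1 := myAux μ₂ μ₁ hB g' hg' hfg2 h1'
  obtain ⟨y₀, hy₀⟩ := e2.exists
  have hset : MeasurableSet {a : X | y₀ + a ∈ (B : Set X)} :=
    (continuous_add_left y₀).measurable hB
  have hfull : ∀ᵐ a ∂μ₁, y₀ + a ∈ (B : Set X) := by
    rw [ae_iff]
    have h := measure_compl hset (measure_ne_top μ₁ _)
    rw [hy₀, measure_univ, tsub_self] at h
    simpa [Set.compl_setOf] using h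
  obtain ⟨z₀, hz1, hz2⟩ := (e1.and hfull).exists
  -- hz1 : μ₂ {y | z₀ + y ∈ B} = 1, hz2 : y₀ + z₀ ∈ B
  refine ⟨y₀, -y₀, ?_, ?_, ?_⟩
  · -- the convolution identity
    have hm1 : Measurable fun a : X => a + y₀ := (continuous_add_right y₀).measurable
    have hm2 : Measurable fun a : X => a + (-y₀) := (continuous_add_right (-y₀)).measurable
    rw [myConv_dirac μ₁ y₀, myConv_dirac μ₂ (-y₀)]
    have hprod : (Measure.map (· + y₀) μ₁).prod (Measure.map (· + (-y₀)) μ₂)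
        = Measure.map (Prod.map (· + y₀) (· + (-y₀))) ρ :=
      Measure.map_prod_map _ _ hm1 hm2
    set E : (X × X) ≃ᵐ (X × X) :=
      (Homeomorph.addRight y₀).toMeasurableEquiv.prodCongr
        (Homeomorph.addRight (-y₀)).toMeasurableEquiv with hEdef
    have hEcoe : (Prod.map (fun a : X => a + y₀) (fun a : X => a + (-y₀))) = ⇑E := rfl
    set g2 : X × X → X := fun q => g (q.1 + (-y₀), q.2 + y₀) with hg2def
    have hg2 : Measurable g2 :=
      hg.comp ((hm2.comp measurable_fst).prodMk (hm1.comp measurable_snd))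
    have hae2 : f =ᵐ[Measure.map (⇑E) ρ] g2 := by
      rw [Filter.EventuallyEq, ae_iff, MeasurableEquiv.map_apply]
      have hsets : ⇑E ⁻¹' {q : X × X | ¬ f q = g2 q} = {p : X × X | ¬ f p = g p} := by
        ext p
        simp only [Set.mem_preimage, Set.mem_setOf_eq, hg2def, hfdef]
        rw [show (E p) = (p.1 + y₀, p.2 + (-y₀)) from rfl]
        have ha : p.1 + y₀ + (p.2 + (-y₀)) = p.1 + p.2 := by abel
        have hb : (p.1 + y₀ + (-y₀), p.2 + (-y₀) + y₀) = p := by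
          have : p.1 + y₀ + (-y₀) = p.1 := by abel
          have h2 : p.2 + (-y₀) + y₀ = p.2 := by abel
          rw [this, h2]
        rw [ha, hb]
      rw [hsets]
      exact hfg'
    calc μ = Measure.map f ρ := hconv'
      _ = Measure.map g ρ := Measure.map_congr hfg
      _ = Measure.map (g2 ∘ ⇑E) ρ := by
          congr 1
          funext p
          show g p = g2 (E p)
          rw [show (E p) = (p.1 + y₀, p.2 + (-y₀)) from rfl]
          simp only [hg2def]
          have ha : p.1 + y₀ + (-y₀) = p.1 := by abel
          have hb : p.2 + (-y₀) + y₀ = p.2 := by abel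
          rw [ha, hb]
      _ = Measure.map g2 (Measure.map (⇑E) ρ) := (Measure.map_map hg2 E.measurable).symm
      _ = Measure.map f (Measure.map (⇑E) ρ) := (Measure.map_congr hae2).symm
      _ = Measure.map f ((Measure.map (· + y₀) μ₁).prod (Measure.map (· + (-y₀)) μ₂)) := by
          rw [hprod, hEcoe]
      _ = (Measure.map (· + y₀) μ₁) ∗ (Measure.map (· + (-y₀)) μ₂) := rfl
  · -- μ₁ shifted is concentrated on B
    have hm1 : Measurable fun a : X => a + y₀ := (continuous_add_right y₀).measurable
    rw [myConv_dirac μ₁ y₀, Measure.map_apply hm1 hB]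
    have : (fun a : X => a + y₀) ⁻¹' (B : Set X) = {a : X | y₀ + a ∈ (B : Set X)} := by
      ext a; simp [add_comm]
    rw [this, hy₀]
  · -- μ₂ shifted is concentrated on B
    have hm2 : Measurable fun a : X => a + (-y₀) := (continuous_add_right (-y₀)).measurable
    rw [myConv_dirac μ₂ (-y₀), Measure.map_apply hm2 hB]
    have hsets : (fun a : X => a + (-y₀)) ⁻¹' (B : Set X) = {y : X | z₀ + y ∈ (B : Set X)} := by
      ext y
      simp only [Set.mem_preimage, SetLike.mem_coe, Set.mem_setOf_eq]
      constructor
      · intro h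
        have h2 := B.add_mem h hz2
        rwa [show y + (-y₀) + (y₀ + z₀) = z₀ + y from by abel] at h2
      · intro h
        have h2 := B.sub_mem h hz2
        rwa [show z₀ + y - (y₀ + z₀) = y + (-y₀) from by abel] at h2
    rw [hsets, hz1]
end

section
/- Let X and G be complete separable metric Abelian groups, α_j, β_j ∈ Aut(X), j = 1,…,n, n ≥ 2, and let p : G → X be a continuous monomorphism such that α_j(p(G)) = β_j(p(G)) = p(G) for all j. Let ξ_j be independent random variables with values in X with distributions μ_j, and assume there exist elements x_j ∈ X such that all distributions μ_j * E_{x_j} are concentrated on the subgroup p(G). If the linear forms L_1 = α_1ξ_1 + ⋯ + α_nξ_n and L_2 = β_1ξ_1 + ⋯ + β_nξ_n are independent, then ξ̂_j = p^{−1}(ξ_j + x_j) are independent random variables with values in G, the maps α̂_j = p^{−1}α_j p and β̂_j = p^{−1}β_j p are topological automorphisms of G, and the linear forms L̂_1 = α̂_1ξ̂_1 + ⋯ + α̂_nξ̂_n and L̂_2 = β̂_1ξ̂_1 + ⋯ + β̂_nξ̂_n are independent. -/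
open MeasureTheory ProbabilityTheory Topology
open Filter Set Pointwise


section Pettis

variable {G : Type*} [TopologicalSpace G] [AddCommGroup G] [IsTopologicalAddGroup G]

lemma not_isMeagre_of_isOpen' [BaireSpace G] {U : Set G} (hU : IsOpen U) (hne : U.Nonempty) :
    ¬ IsMeagre U := by
  intro h
  have hd : Dense Uᶜ := dense_of_mem_residual h
  have : interior U = ∅ := interior_eq_empty_iff_dense_compl.mpr hd
  rw [hU.interior_eq] at this
  exact hne.ne_empty this

lemma isMeagre_congr {A B : Set G} (h : A =ᵇ B) (hA : IsMeagre A) : IsMeagre B := by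
  have h' := Filter.eventuallyEq_set.mp h
  exact (h'.and hA).mono fun x ⟨hx, hxA⟩ hxB => hxA (hx.mpr hxB)

/-- **Pettis' lemma**: a nonmeager Baire-measurable set in a Baire topological group
satisfies that `A - A` is a neighborhood of `0`. -/
lemma pettis_sub_mem_nhds [BaireSpace G] {A : Set G} (hA : BaireMeasurableSet A)
    (hnm : ¬ IsMeagre A) : A - A ∈ 𝓝 (0 : G) := by
  obtain ⟨U, hUo, hAU⟩ := hA.residualEq_isOpen
  have hUne : U.Nonempty := by
    rcases U.eq_empty_or_nonempty with h | h
    · exfalso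
      apply hnm
      subst h
      have h' := Filter.eventuallyEq_set.mp hAU
      exact h'.mono fun x hx hxA => (hx.mp hxA).elim
    · exact h
  obtain ⟨u, hu⟩ := hUne
  have key : ∀ g : G, (g + u) ∈ U → g ∈ A - A := by
    intro g hgu
    -- the translated set
    have htrans : ∀ B : Set G, B =ᵇ U → ((g + ·) '' B) =ᵇ ((g + ·) '' U) := by
      intro B hB
      have he : ∀ C : Set G, ((g + ·) '' C : Set G) = (fun x => -g + x) ⁻¹' C := by
        intro C
        ext y
        simp only [Set.mem_image, Set.mem_preimage]
        constructor
        · rintro ⟨c, hc, rfl⟩; simpa using hc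
        · intro hc; exact ⟨-g + y, hc, by abel⟩
      rw [he B, he U]
      have hmap : Filter.Tendsto (fun x : G => -g + x) (residual G) (residual G) := by
        have ho : IsOpenMap (fun x : G => -g + x) := (Homeomorph.addLeft (-g)).isOpenMap
        exact tendsto_residual_of_isOpenMap (continuous_const.add continuous_id) ho
      exact hB.comp_tendsto hmap
    have hint : ((A ∩ ((g + ·) '' A) : Set G)) =ᵇ ((U ∩ ((g + ·) '' U) : Set G)) := hAU.inter (htrans A hAU)
    have hUUopen : IsOpen (U ∩ ((g + ·) '' U)) :=
      hUo.inter ((Homeomorph.addLeft g).isOpenMap U hUo)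
    have hUUne : (U ∩ ((g + ·) '' U)).Nonempty := ⟨g + u, hgu, ⟨u, hu, rfl⟩⟩
    have hnmUU := not_isMeagre_of_isOpen' hUUopen hUUne
    have hAAne : (A ∩ ((g + ·) '' A)).Nonempty := by
      rcases (A ∩ ((g + ·) '' A)).eq_empty_or_nonempty with h | h
      · exfalso
        apply hnmUU
        exact isMeagre_congr hint (h ▸ IsMeagre.empty)
      · exact h
    obtain ⟨a, haA, b, hbA, rfl⟩ := hAAne
    have : (g + b) - b = g := by abel
    exact this ▸ Set.sub_mem_sub haA hbA
  have hsub : (fun v => v - u) '' U ⊆ A - A := by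
    rintro _ ⟨v, hv, rfl⟩
    exact key _ (by simpa [sub_add_cancel] using hv)
  refine Filter.mem_of_superset ?_ hsub
  have hopen : IsOpen ((fun v => v - u) '' U) := by
    have : (fun v : G => v - u) = fun v => v + (-u) := by funext v; rw [sub_eq_add_neg]
    rw [this]
    exact (Homeomorph.addRight (-u)).isOpenMap U hUo
  exact hopen.mem_nhds ⟨u, hu, sub_self u⟩

/-- **Pettis/Banach theorem**: a Borel-measurable homomorphism from a Baire topological
group to a separable topological group is continuous. -/
theorem continuous_of_measurable_addHom {G H : Type*}
    [TopologicalSpace G] [AddCommGroup G] [IsTopologicalAddGroup G] [BaireSpace G] [Nonempty G]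
    [MeasurableSpace G] [BorelSpace G]
    [TopologicalSpace H] [AddCommGroup H] [IsTopologicalAddGroup H]
    [TopologicalSpace.SeparableSpace H]
    [MeasurableSpace H] [OpensMeasurableSpace H]
    (f : G →+ H) (hf : Measurable f) : Continuous f := by
  apply continuous_of_continuousAt_zero f
  rw [ContinuousAt, map_zero]
  intro V hV
  -- find an open W ∈ 𝓝 0 with W - W ⊆ V
  obtain ⟨W, hWmem, hWo, hWV⟩ : ∃ W ∈ 𝓝 (0 : H), IsOpen W ∧ W - W ⊆ V := by
    have hsub : Filter.Tendsto (fun p : H × H => p.1 - p.2) (𝓝 ((0 : H), (0 : H))) (𝓝 0) := by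
      have := (continuous_sub : Continuous fun p : H × H => p.1 - p.2).tendsto ((0 : H), (0 : H))
      simpa using this
    have hmem : (fun p : H × H => p.1 - p.2) ⁻¹' V ∈ 𝓝 ((0 : H), (0 : H)) := hsub hV
    rw [nhds_prod_eq, Filter.mem_prod_iff] at hmem
    obtain ⟨W₁, hW₁, W₂, hW₂, hWsub⟩ := hmem
    refine ⟨interior (W₁ ∩ W₂), interior_mem_nhds.mpr (Filter.inter_mem hW₁ hW₂),
      isOpen_interior, ?_⟩
    rw [Set.sub_subset_iff]
    intro a ha b hb
    exact hWsub (Set.mk_mem_prod (interior_subset ha).1 (interior_subset hb).2)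
  obtain ⟨D, hDc, hDd⟩ := TopologicalSpace.exists_countable_dense H
  have h0W : (0 : H) ∈ W := mem_of_mem_nhds hWmem
  have hcover : (⋃ d ∈ D, f ⁻¹' ((d + ·) '' W)) = Set.univ := by
    ext g
    simp only [Set.mem_iUnion, Set.mem_preimage, Set.mem_image, Set.mem_univ, iff_true]
    have hTo : IsOpen ((fun w => f g + -w) '' W) := by
      have : (fun w : H => f g + -w) '' W = (Homeomorph.addLeft (f g)) '' ((Homeomorph.neg H) '' W) := by
        rw [Set.image_image]; rfl
      rw [this]
      exact (Homeomorph.addLeft (f g)).isOpenMap _ (((Homeomorph.neg H)).isOpenMap _ hWo)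
    have hTne : ((fun w => f g + -w) '' W).Nonempty := ⟨f g, 0, h0W, by simp⟩
    obtain ⟨d, hdD, hdT⟩ := hDd.exists_mem_open hTo hTne
    obtain ⟨w, hw, rfl⟩ := hdT
    exact ⟨f g + -w, hdD, w, hw, by abel⟩
  have hex : ∃ d ∈ D, ¬ IsMeagre (f ⁻¹' ((d + ·) '' W)) := by
    by_contra h
    push_neg at h
    have huniv : IsMeagre (Set.univ : Set G) := by
      rw [← hcover]
      show (⋃ d ∈ D, f ⁻¹' ((d + ·) '' W))ᶜ ∈ residual G
      rw [Set.compl_iUnion₂]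
      exact (countable_bInter_mem hDc).mpr fun d hd => h d hd
    have : Dense ((Set.univ : Set G)ᶜ) := dense_of_mem_residual huniv
    rw [Set.compl_univ] at this
    exact absurd this.nonempty (by simp)
  obtain ⟨d, hdD, hnm⟩ := hex
  have hABaire : BaireMeasurableSet (f ⁻¹' ((d + ·) '' W)) := by
    have : MeasurableSet (f ⁻¹' ((d + ·) '' W)) := by
      apply hf
      have : IsOpen ((d + ·) '' W) := (Homeomorph.addLeft d).isOpenMap _ hWo
      exact this.measurableSet
    exact this.baireMeasurableSet
  have hmem := pettis_sub_mem_nhds hABaire hnm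
  rw [Filter.mem_map]
  refine Filter.mem_of_superset hmem ?_
  rintro z hz
  rw [Set.mem_sub] at hz
  obtain ⟨a, ha, b, hb, rfl⟩ := hz
  show f (a - b) ∈ V
  rw [map_sub]
  obtain ⟨w₁, hw₁, hfa⟩ := ha
  obtain ⟨w₂, hw₂, hfb⟩ := hb
  have : f a - f b = w₁ - w₂ := by rw [← hfa, ← hfb]; beta_reduce; abel
  rw [this]
  exact hWV (Set.sub_mem_sub hw₁ hw₂)

end Pettis



/-- The (set-theoretic) inverse of an injective homomorphism `p : G → X`, used to pull
random variables taking values in the subgroup `p(G)` back to `G`. -/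
noncomputable def pInv {G X : Type} [AddCommGroup G] [AddCommGroup X] (p : G →+ X) :
    X → G :=
  haveI : Nonempty G := ⟨0⟩
  Function.invFun p

section pInvLemmas

variable {G X : Type} [AddCommGroup G] [AddCommGroup X]

lemma pInv_comp (p : G →+ X) (hpinj : Function.Injective p) (g : G) : pInv p (p g) = g := by
  unfold pInv
  exact Function.leftInverse_invFun hpinj g

lemma pInv_app (p : G →+ X) {y : X} (hy : y ∈ Set.range p) : p (pInv p y) = y := by
  unfold pInv
  exact Function.invFun_eq hy

lemma pInv_junk (p : G →+ X) {y y' : X} (hy : y ∉ Set.range p) (hy' : y' ∉ Set.range p) :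
    pInv p y = pInv p y' := by
  unfold pInv
  unfold Function.invFun
  rw [dif_neg (by simpa [Set.mem_range] using hy), dif_neg (by simpa [Set.mem_range] using hy')]

lemma measurable_pInv
    [TopologicalSpace G] [PolishSpace G] [MeasurableSpace G] [BorelSpace G]
    [TopologicalSpace X] [T2Space X] [MeasurableSpace X] [BorelSpace X]
    (p : G →+ X) (hp : Continuous p) (hpinj : Function.Injective p) :
    Measurable (pInv p) := by
  have me : MeasurableEmbedding p := hp.measurableEmbedding hpinj
  have hrange : MeasurableSet (Set.range p) := by
    rw [← Set.image_univ]
    exact me.measurableSet_image' MeasurableSet.univ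
  intro s hs
  by_cases hc : ∃ y, y ∉ Set.range p ∧ pInv p y ∈ s
  · have heq : pInv p ⁻¹' s = p '' s ∪ (Set.range p)ᶜ := by
      ext y
      constructor
      · intro hy
        by_cases hyr : y ∈ Set.range p
        · left
          obtain ⟨g, rfl⟩ := hyr
          rw [Set.mem_preimage, pInv_comp p hpinj] at hy
          exact ⟨g, hy, rfl⟩
        · right; exact hyr
      · rintro (⟨g, hg, rfl⟩ | hy)
        · show pInv p (p g) ∈ s
          rw [pInv_comp p hpinj]
          exact hg
        · obtain ⟨y₀, hy₀, hy₀s⟩ := hc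
          show pInv p y ∈ s
          rw [pInv_junk p hy hy₀]
          exact hy₀s
    rw [heq]
    exact (me.measurableSet_image' hs).union hrange.compl
  · push_neg at hc
    have heq : pInv p ⁻¹' s = p '' s := by
      ext y
      constructor
      · intro hy
        by_cases hyr : y ∈ Set.range p
        · obtain ⟨g, rfl⟩ := hyr
          rw [Set.mem_preimage, pInv_comp p hpinj] at hy
          exact ⟨g, hy, rfl⟩
        · exact absurd hy (hc y hyr)
      · rintro ⟨g, hg, rfl⟩
        show pInv p (p g) ∈ s
        rw [pInv_comp p hpinj]
        exact hg
    rw [heq]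
    exact me.measurableSet_image' hs

/-- Lift of an automorphism `e` of `X` preserving `range p` to an automorphism of `G`. -/
noncomputable def liftEquiv (p : G →+ X) (hpinj : Function.Injective p) (e : X ≃+ X)
    (he : ∀ y ∈ Set.range p, e y ∈ Set.range p)
    (he' : ∀ y ∈ Set.range p, e.symm y ∈ Set.range p) : G ≃+ G where
  toFun g := pInv p (e (p g))
  invFun g := pInv p (e.symm (p g))
  left_inv g := by
    show pInv p (e.symm (p (pInv p (e (p g))))) = g
    have h1 : (e (p g) : X) ∈ Set.range p := he _ ⟨g, rfl⟩
    have h2 : p (pInv p (e (p g))) = e (p g) := pInv_app p h1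
    rw [h2, e.symm_apply_apply, pInv_comp p hpinj]
  right_inv g := by
    show pInv p (e (p (pInv p (e.symm (p g))))) = g
    have h1 : (e.symm (p g) : X) ∈ Set.range p := he' _ ⟨g, rfl⟩
    have h2 : p (pInv p (e.symm (p g))) = e.symm (p g) := pInv_app p h1
    rw [h2, e.apply_symm_apply, pInv_comp p hpinj]
  map_add' a b := by
    show pInv p (e (p (a + b))) = pInv p (e (p a)) + pInv p (e (p b))
    apply hpinj
    rw [pInv_app p (he _ ⟨a + b, rfl⟩),
      map_add p (pInv p (e (p a))) (pInv p (e (p b))),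
      pInv_app p (he _ ⟨a, rfl⟩), pInv_app p (he _ ⟨b, rfl⟩), ← map_add e, ← map_add p]

lemma liftEquiv_spec (p : G →+ X) (hpinj : Function.Injective p) (e : X ≃+ X)
    (he : ∀ y ∈ Set.range p, e y ∈ Set.range p)
    (he' : ∀ y ∈ Set.range p, e.symm y ∈ Set.range p) (g : G) :
    p (liftEquiv p hpinj e he he' g) = e (p g) :=
  pInv_app p (he _ ⟨g, rfl⟩)

end pInvLemmas


/-- **Proposition 1.**  Let `X` and `G` be complete separable metric Abelian groups,
`α j, β j ∈ Aut(X)`, `j = 1, …, n`, `n ≥ 2`, and `p : G → X` a continuous monomorphism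
with `α j (p(G)) = β j (p(G)) = p(G)`.  Let `ξ j` be independent random variables with
values in `X` and distributions `μ j`, and assume there are `x j ∈ X` such that all
`μ j * E_{x j}` are concentrated on `p(G)`.  If `L₁ = α 1 ξ 1 + ⋯ + α n ξ n` and
`L₂ = β 1 ξ 1 + ⋯ + β n ξ n` are independent, then `ξ̂ j = p⁻¹(ξ j + x j)` are
independent random variables with values in `G`, the maps `α̂ j = p⁻¹ ∘ α j ∘ p` and
`β̂ j = p⁻¹ ∘ β j ∘ p` are topological automorphisms of `G`, and the linear forms
`L̂₁ = α̂ 1 ξ̂ 1 + ⋯ + α̂ n ξ̂ n` and `L̂₂ = β̂ 1 ξ̂ 1 + ⋯ + β̂ n ξ̂ n` are independent. -/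
theorem reduction_along_monomorphism
    {X G : Type}
    [MetricSpace X] [CompleteSpace X] [TopologicalSpace.SeparableSpace X]
    [AddCommGroup X] [IsTopologicalAddGroup X] [MeasurableSpace X] [BorelSpace X]
    [MetricSpace G] [CompleteSpace G] [TopologicalSpace.SeparableSpace G]
    [AddCommGroup G] [IsTopologicalAddGroup G] [MeasurableSpace G] [BorelSpace G]
    (p : G →+ X) (hp : Continuous p) (hpinj : Function.Injective p)
    {Ω : Type} [MeasurableSpace Ω] (P : Measure Ω) [IsProbabilityMeasure P]
    (n : ℕ) (hn : 2 ≤ n)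
    (α β : Fin n → X ≃+ X)
    (hαc : ∀ j, Continuous (α j)) (hαs : ∀ j, Continuous (α j).symm)
    (hβc : ∀ j, Continuous (β j)) (hβs : ∀ j, Continuous (β j).symm)
    (hαp : ∀ j, α j '' Set.range p = Set.range p)
    (hβp : ∀ j, β j '' Set.range p = Set.range p)
    (ξ : Fin n → Ω → X) (hξ : ∀ j, Measurable (ξ j))
    (hindep : iIndepFun ξ P)
    (μ : Fin n → Measure X) (hμ : ∀ j, μ j = P.map (ξ j))
    (x : Fin n → X) (hconc : ∀ j, (μ j).map (· + x j) (Set.range p) = 1)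
    (hL : IndepFun (fun ω => ∑ j, α j (ξ j ω)) (fun ω => ∑ j, β j (ξ j ω)) P) :
    (∀ j, Measurable fun ω => pInv p (ξ j ω + x j)) ∧
    iIndepFun (fun j ω => pInv p (ξ j ω + x j)) P ∧
    ∃ αh βh : Fin n → G ≃+ G,
      (∀ j, Continuous (αh j) ∧ Continuous (αh j).symm ∧
        ∀ g, p (αh j g) = α j (p g)) ∧
      (∀ j, Continuous (βh j) ∧ Continuous (βh j).symm ∧
        ∀ g, p (βh j g) = β j (p g)) ∧
      IndepFun (fun ω => ∑ j, αh j (pInv p (ξ j ω + x j)))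
        (fun ω => ∑ j, βh j (pInv p (ξ j ω + x j))) P := by
  haveI : Nonempty G := ⟨0⟩
  have hpm : Measurable (pInv p) := measurable_pInv p hp hpinj
  have me : MeasurableEmbedding p := hp.measurableEmbedding hpinj
  have hRmeas : MeasurableSet (Set.range p) := by
    rw [← Set.image_univ]
    exact me.measurableSet_image' MeasurableSet.univ
  have heα : ∀ j, ∀ y ∈ Set.range p, α j y ∈ Set.range p := fun j y hy => by
    rw [← hαp j]; exact Set.mem_image_of_mem _ hy
  have heα' : ∀ j, ∀ y ∈ Set.range p, (α j).symm y ∈ Set.range p := fun j y hy => by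
    rw [← hαp j] at hy
    obtain ⟨z, hz, rfl⟩ := hy
    simpa using hz
  have heβ : ∀ j, ∀ y ∈ Set.range p, β j y ∈ Set.range p := fun j y hy => by
    rw [← hβp j]; exact Set.mem_image_of_mem _ hy
  have heβ' : ∀ j, ∀ y ∈ Set.range p, (β j).symm y ∈ Set.range p := fun j y hy => by
    rw [← hβp j] at hy
    obtain ⟨z, hz, rfl⟩ := hy
    simpa using hz
  have hmart : ∀ j, Measurable fun ω => ξ j ω + x j := fun j =>
    (continuous_id.add continuous_const).measurable.comp (hξ j)
  have hhatmeas : ∀ j, Measurable fun ω => pInv p (ξ j ω + x j) := fun j =>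
    hpm.comp (hmart j)
  refine ⟨hhatmeas, ?_, fun j => liftEquiv p hpinj (α j) (heα j) (heα' j),
    fun j => liftEquiv p hpinj (β j) (heβ j) (heβ' j), ?_, ?_, ?_⟩
  · exact hindep.comp (fun j y => pInv p (y + x j))
      (fun j => hpm.comp (continuous_id.add continuous_const).measurable)
  · intro j
    refine ⟨?_, ?_, fun g => liftEquiv_spec p hpinj (α j) (heα j) (heα' j) g⟩
    · exact continuous_of_measurable_addHom
        (liftEquiv p hpinj (α j) (heα j) (heα' j)).toAddMonoidHom
        (hpm.comp (((hαc j).comp hp).measurable))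
    · exact continuous_of_measurable_addHom
        (liftEquiv p hpinj (α j) (heα j) (heα' j)).symm.toAddMonoidHom
        (hpm.comp (((hαs j).comp hp).measurable))
  · intro j
    refine ⟨?_, ?_, fun g => liftEquiv_spec p hpinj (β j) (heβ j) (heβ' j) g⟩
    · exact continuous_of_measurable_addHom
        (liftEquiv p hpinj (β j) (heβ j) (heβ' j)).toAddMonoidHom
        (hpm.comp (((hβc j).comp hp).measurable))
    · exact continuous_of_measurable_addHom
        (liftEquiv p hpinj (β j) (heβ j) (heβ' j)).symm.toAddMonoidHom
        (hpm.comp (((hβs j).comp hp).measurable))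
  · -- independence of the lifted linear forms
    have hF₁ : Measurable fun y => pInv p (y + ∑ j, α j (x j)) :=
      hpm.comp (continuous_id.add continuous_const).measurable
    have hF₂ : Measurable fun y => pInv p (y + ∑ j, β j (x j)) :=
      hpm.comp (continuous_id.add continuous_const).measurable
    have hae_mem : ∀ᵐ ω ∂P, ∀ j, ξ j ω + x j ∈ Set.range p := by
      rw [MeasureTheory.ae_all_iff]
      intro j
      have hadd : Measurable (· + x j : X → X) := measurable_add_const (x j)
      have hcomp : Measurable ((· + x j) ∘ ξ j) := hadd.comp (hξ j)
      have h1 : P (((· + x j) ∘ ξ j) ⁻¹' Set.range p) = 1 := by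
        have hconcj := hconc j
        rw [hμ j, Measure.map_map hadd (hξ j),
          Measure.map_apply hcomp hRmeas] at hconcj
        exact hconcj
      rw [ae_iff]
      have heq : {ω | ¬ (ξ j ω + x j ∈ Set.range p)} = (((· + x j) ∘ ξ j) ⁻¹' Set.range p)ᶜ :=
        rfl
      rw [heq, measure_compl (hcomp hRmeas) (measure_ne_top P _), measure_univ, h1]
      simp
    have habs₁ : (fun ω => pInv p ((∑ j, α j (ξ j ω)) + ∑ j, α j (x j))) =ᵐ[P]
        (fun ω => ∑ j, (liftEquiv p hpinj (α j) (heα j) (heα' j)) (pInv p (ξ j ω + x j))) := by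
      filter_upwards [hae_mem] with ω hω
      have hkey : p (∑ j, (liftEquiv p hpinj (α j) (heα j) (heα' j)) (pInv p (ξ j ω + x j)))
          = (∑ j, α j (ξ j ω)) + ∑ j, α j (x j) := by
        rw [map_sum]
        have hterm : ∀ j ∈ Finset.univ,
            p ((liftEquiv p hpinj (α j) (heα j) (heα' j)) (pInv p (ξ j ω + x j)))
            = α j (ξ j ω) + α j (x j) := by
          intro j _
          rw [liftEquiv_spec, pInv_app p (hω j), map_add]
        rw [Finset.sum_congr rfl hterm, Finset.sum_add_distrib]
      rw [← hkey, pInv_comp p hpinj]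
    have habs₂ : (fun ω => pInv p ((∑ j, β j (ξ j ω)) + ∑ j, β j (x j))) =ᵐ[P]
        (fun ω => ∑ j, (liftEquiv p hpinj (β j) (heβ j) (heβ' j)) (pInv p (ξ j ω + x j))) := by
      filter_upwards [hae_mem] with ω hω
      have hkey : p (∑ j, (liftEquiv p hpinj (β j) (heβ j) (heβ' j)) (pInv p (ξ j ω + x j)))
          = (∑ j, β j (ξ j ω)) + ∑ j, β j (x j) := by
        rw [map_sum]
        have hterm : ∀ j ∈ Finset.univ,
            p ((liftEquiv p hpinj (β j) (heβ j) (heβ' j)) (pInv p (ξ j ω + x j)))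
            = β j (ξ j ω) + β j (x j) := by
          intro j _
          rw [liftEquiv_spec, pInv_app p (hω j), map_add]
        rw [Finset.sum_congr rfl hterm, Finset.sum_add_distrib]
      rw [← hkey, pInv_comp p hpinj]
    exact (hL.comp hF₁ hF₂).congr habs₁ habs₂
end

section
/- Let Y be a topological Abelian group and let ψ be a continuous real-valued function on Y satisfying the equation Δ_{2k} Δ_h² ψ(y) = 0 for all h, k, y ∈ Y, together with ψ(−y) = ψ(y) for all y and ψ(0) = 0. Then ψ can be represented in the form ψ(y) = φ(y) + c_α for y ∈ y_α + cl(Y^{(2)}), where φ is a continuous function on Y satisfying φ(u+v) + φ(u−v) = 2[φ(u) + φ(v)] for all u, v ∈ Y, the c_α are real constants, and Y = ⋃_α (y_α + cl(Y^{(2)})), with y_0 = 0, is the decomposition of Y into cosets of the closure of the subgroup Y^{(2)} = {2y : y ∈ Y}. -/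
/-- The closure of the subgroup `Y⁽²⁾ = {2y : y ∈ Y}` of a topological abelian group. -/
def twoSubgroupClosure (Y : Type) [AddCommGroup Y] [TopologicalSpace Y]
    [IsTopologicalAddGroup Y] : AddSubgroup Y :=
  (AddMonoidHom.range (zsmulAddGroupHom (2 : ℤ) : Y →+ Y)).topologicalClosure

/-- **Lemma 9.**  Let `Y` be a topological Abelian group and `ψ : Y → ℝ` a continuous
function satisfying `Δ_{2k} Δ_h² ψ(y) = 0` for all `h, k, y ∈ Y`, with `ψ(−y) = ψ(y)` and
`ψ(0) = 0`.  Then `ψ(y) = φ(y) + c_α` for `y ∈ y_α + cl (Y⁽²⁾)`, where `φ` is a continuous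
function on `Y` satisfying `φ(u+v) + φ(u−v) = 2(φ(u) + φ(v))` and the constants `c_α`
depend only on the coset of `y` modulo the closure of `Y⁽²⁾` (i.e. there is a function `c`
on the quotient group with `ψ = φ + c ∘ mk`). -/
theorem quadratic_plus_coset_constants
    {Y : Type} [AddCommGroup Y] [TopologicalSpace Y] [IsTopologicalAddGroup Y]
    (ψ : Y → ℝ) (hcont : Continuous ψ)
    (heq : ∀ h k y : Y,
      (ψ (y + (k + k) + (h + h)) - 2 * ψ (y + (k + k) + h) + ψ (y + (k + k))) -
        (ψ (y + (h + h)) - 2 * ψ (y + h) + ψ y) = 0)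
    (heven : ∀ y, ψ (-y) = ψ y) (h0 : ψ 0 = 0) :
    ∃ φ : Y → ℝ, Continuous φ ∧
      (∀ u v : Y, φ (u + v) + φ (u - v) = 2 * (φ u + φ v)) ∧
      ∃ c : Y ⧸ twoSubgroupClosure Y → ℝ,
        ∀ y : Y, ψ y = φ y + c (QuotientAddGroup.mk y) := by
  -- Step 1: the parallelogram law with one variable in `2Y`.
  have star : ∀ k h : Y, ψ (k + k + h) + ψ (k + k - h) = 2 * ψ (k + k) + 2 * ψ h := by
    intro k h
    have e := heq h k (-h)
    have a1 : -h + (k + k) + (h + h) = k + k + h := by abel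
    have a2 : -h + (k + k) + h = k + k := by abel
    have a3 : -h + (k + k) = k + k - h := by abel
    have a4 : -h + (h + h) = h := by abel
    have a5 : -h + h = (0 : Y) := by abel
    rw [a1, a2, a3, a4, a5, h0, heven h] at e
    linarith
  -- Step 2: the key translation identity.
  have T : ∀ y k : Y,
      ψ ((y + (k + k)) + (y + (k + k))) - ψ (y + y) =
        4 * ψ (y + (k + k)) - 4 * ψ y := by
    intro y k
    -- instance (2): step 2k, h = y + 2k
    have e2 := star k (y + (k + k))
    have b1 : k + k + (y + (k + k)) = y + (k + k) + (k + k) := by abel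
    have b2 : k + k - (y + (k + k)) = -y := by abel
    rw [b1, b2, heven y] at e2
    -- instance (A'): step 2(y+k), h = 2k
    have eA := star (y + k) (k + k)
    have c1 : y + k + (y + k) + (k + k) = (y + (k + k)) + (y + (k + k)) := by abel
    have c2 : y + k + (y + k) - (k + k) = y + y := by abel
    have c3 : y + k + (y + k) = y + y + (k + k) := by abel
    rw [c1, c2, c3] at eA
    -- instance (B): step 2(y+k), h = y + 2k
    have eB := star (y + k) (y + (k + k))
    have d1 : y + k + (y + k) + (y + (k + k)) = y + y + y + (k + k) + (k + k) := by abel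
    have d2 : y + k + (y + k) - (y + (k + k)) = y := by abel
    have d3 : y + k + (y + k) = y + y + (k + k) := by abel
    rw [d1, d2, d3] at eB
    -- instance (C): step 2(y+2k), h = y
    have eC := star (y + (k + k)) y
    have f1 : y + (k + k) + (y + (k + k)) + y = y + y + y + (k + k) + (k + k) := by abel
    have f2 : y + (k + k) + (y + (k + k)) - y = y + (k + k) + (k + k) := by abel
    rw [f1, f2] at eC
    linarith
  -- The quadratic part.
  set φ : Y → ℝ := fun y => ψ (y + y) / 4 with hφ
  have hφcont : Continuous φ := by
    apply Continuous.div_const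
    exact hcont.comp (continuous_id.add continuous_id)
  have hpar : ∀ u v : Y, φ (u + v) + φ (u - v) = 2 * (φ u + φ v) := by
    intro u v
    have e := star u (v + v)
    have g1 : u + u + (v + v) = (u + v) + (u + v) := by abel
    have g2 : u + u - (v + v) = (u - v) + (u - v) := by abel
    rw [g1, g2] at e
    simp only [hφ]
    linarith
  -- ψ - φ is constant on cosets of the closure of 2Y.
  have hconst : ∀ z w : Y, w ∈ twoSubgroupClosure Y →
      ψ (z + w) - φ (z + w) = ψ z - φ z := by
    intro z w hw
    have hw' : w ∈ closure ((AddMonoidHom.range (zsmulAddGroupHom (2 : ℤ) : Y →+ Y) : Set Y)) := hw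
    have hcl : IsClosed {w : Y | ψ (z + w) - φ (z + w) = ψ z - φ z} := by
      apply isClosed_eq _ continuous_const
      apply Continuous.sub
      · exact hcont.comp (continuous_const.add continuous_id)
      · exact hφcont.comp (continuous_const.add continuous_id)
    have hsub : ((AddMonoidHom.range (zsmulAddGroupHom (2 : ℤ) : Y →+ Y) : Set Y)) ⊆
        {w : Y | ψ (z + w) - φ (z + w) = ψ z - φ z} := by
      rintro _ ⟨k, rfl⟩
      have hk : (zsmulAddGroupHom (2 : ℤ) : Y →+ Y) k = k + k := by
        simp [zsmulAddGroupHom_apply, two_zsmul]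
      rw [hk]
      have := T z k
      simp only [Set.mem_setOf_eq, hφ]
      linarith
    exact closure_minimal hsub hcl hw'
  refine ⟨φ, hφcont, hpar, fun q => ψ q.out - φ q.out, fun y => ?_⟩
  set o : Y := (QuotientAddGroup.mk y : Y ⧸ twoSubgroupClosure Y).out with ho
  have hmk : (QuotientAddGroup.mk o : Y ⧸ twoSubgroupClosure Y) = QuotientAddGroup.mk y := by
    rw [ho]; exact QuotientAddGroup.out_eq' _
  have hmem : y - o ∈ twoSubgroupClosure Y := by
    have h1 := (QuotientAddGroup.eq (s := twoSubgroupClosure Y)).mp hmk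
    simpa [sub_eq_add_neg, add_comm] using h1
  have hco := hconst o (y - o) hmem
  rw [add_sub_cancel] at hco
  rw [show (fun q : Y ⧸ twoSubgroupClosure Y => ψ q.out - φ q.out)
      (QuotientAddGroup.mk y) = ψ o - φ o from rfl]
  linarith
end

section
/- Let X = ℝ^{ℵ_0} × T, where ℝ^{ℵ_0} is the space of all real sequences with the product topology and T is the circle group. Let ξ_1, ξ_2 be independent identically distributed random variables with values in X and common distribution μ whose characteristic function does not vanish. If the linear forms L_1 = ξ_1 + ξ_2 and L_2 = ξ_1 − ξ_2 are independent, then μ is a Gaussian distribution on X. -/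
open MeasureTheory ProbabilityTheory

noncomputable instance : MeasurableSpace Circle := borel Circle
instance : BorelSpace Circle := ⟨rfl⟩
instance (α : Type) [MeasurableSpace α] : MeasurableSpace (Additive α) :=
  ‹MeasurableSpace α›

/-- The pairing `⟨t, s⟩ = ∑ j, t j * s j` between `ℝ^ℵ₀` and the finitely supported
sequences `ℝ^{ℵ₀*}`. -/
noncomputable def pairSeq (t : ℕ → ℝ) (s : ℕ →₀ ℝ) : ℝ :=
  s.sum fun j c => t j * c

/-- The value at `x ∈ X = ℝ^ℵ₀ × 𝕋` of the character of `X` indexed by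
`(s, n) ∈ ℝ^{ℵ₀*} × ℤ`, namely `exp(i⟨t, s⟩) zⁿ` for `x = (t, z)`. -/
noncomputable def charValRT (x : (ℕ → ℝ) × Additive Circle) (s : ℕ →₀ ℝ) (n : ℤ) : ℂ :=
  Complex.exp (Complex.I * (pairSeq x.1 s : ℂ)) * ((x.2.toMul ^ n : Circle) : ℂ)

/-- The characteristic function of a measure `μ` on `X = ℝ^ℵ₀ × 𝕋` at the character
indexed by `(s, n)`. -/
noncomputable def charFnRT (μ : Measure ((ℕ → ℝ) × Additive Circle))
    (s : ℕ →₀ ℝ) (n : ℤ) : ℂ :=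
  ∫ x, charValRT x s n ∂μ

/-- The finitely supported sequence determined by a vector `v ∈ ℝ^N`. -/
noncomputable def finsuppOfFin {N : ℕ} (v : Fin N → ℝ) : ℕ →₀ ℝ :=
  ∑ i : Fin N, Finsupp.single (i : ℕ) (v i)

/-- A probability distribution `μ` on `X = ℝ^ℵ₀ × 𝕋` is Gaussian if its characteristic
function has the form `μ̂(y) = (x₀, y) exp(−φ(y))`, where `x₀ ∈ X` and `φ` is a
nonnegative function on the character group `ℝ^{ℵ₀*} × ℤ` satisfying
`φ(u+v) + φ(u−v) = 2(φ(u) + φ(v))` and continuous in the inductive limit topology of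
`ℝ^{ℵ₀*}` (i.e. continuous on `ℝ^N × {k}` for every `N` and every `k ∈ ℤ`). -/
def IsGaussianRT (μ : Measure ((ℕ → ℝ) × Additive Circle)) : Prop :=
  IsProbabilityMeasure μ ∧
  ∃ (x₀ : (ℕ → ℝ) × Additive Circle) (φ : (ℕ →₀ ℝ) × ℤ → ℝ),
    (∀ y, 0 ≤ φ y) ∧
    (∀ N : ℕ, ∀ k : ℤ, Continuous fun v : Fin N → ℝ => φ (finsuppOfFin v, k)) ∧
    (∀ u v : (ℕ →₀ ℝ) × ℤ, φ (u + v) + φ (u - v) = 2 * (φ u + φ v)) ∧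
    ∀ (s : ℕ →₀ ℝ) (n : ℤ),
      charFnRT μ s n = charValRT x₀ s n * Complex.exp (-(φ (s, n) : ℂ))

/-! ### Auxiliary lemmas -/

section Aux

-- pairSeq lemmas
lemma pairSeq_zero_right (t : ℕ → ℝ) : pairSeq t 0 = 0 := by
  simp [pairSeq]

lemma pairSeq_add_right (t : ℕ → ℝ) (s s' : ℕ →₀ ℝ) :
    pairSeq t (s + s') = pairSeq t s + pairSeq t s' := by
  classical
  exact Finsupp.sum_add_index' (fun a => mul_zero _) (fun a b₁ b₂ => mul_add _ _ _)

lemma pairSeq_single (t : ℕ → ℝ) (j : ℕ) (r : ℝ) :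
    pairSeq t (Finsupp.single j r) = t j * r := by
  classical
  simp [pairSeq, Finsupp.sum_single_index]

lemma pairSeq_add_left (t t' : ℕ → ℝ) (s : ℕ →₀ ℝ) :
    pairSeq (t + t') s = pairSeq t s + pairSeq t' s := by
  classical
  unfold pairSeq Finsupp.sum
  rw [← Finset.sum_add_distrib]
  exact Finset.sum_congr rfl fun j _ => by simp [add_mul]

lemma pairSeq_zero_left (s : ℕ →₀ ℝ) : pairSeq 0 s = 0 := by
  simp [pairSeq]

lemma Circle.coe_pow' (z : Circle) (m : ℕ) : ((z ^ m : Circle) : ℂ) = (z : ℂ) ^ m :=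
  map_pow Circle.coeHom z m

lemma Circle.coe_zpow' (z : Circle) (n : ℤ) : ((z ^ n : Circle) : ℂ) = (z : ℂ) ^ n := by
  cases n with
  | ofNat m => simpa using Circle.coe_pow' z m
  | negSucc m => rw [zpow_negSucc, zpow_negSucc, Circle.coe_inv, Circle.coe_pow']

/-- Abbreviation for the value of the character indexed by `y` at the point `x`. -/
noncomputable def eRT (x : (ℕ → ℝ) × Additive Circle) (y : (ℕ →₀ ℝ) × ℤ) : ℂ :=
  charValRT x y.1 y.2

lemma abs_eRT (x : (ℕ → ℝ) × Additive Circle) (y : (ℕ →₀ ℝ) × ℤ) :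
    ‖eRT x y‖ = 1 := by
  simp [eRT, charValRT, Complex.norm_exp, Circle.norm_coe]

lemma norm_eRT (x : (ℕ → ℝ) × Additive Circle) (y : (ℕ →₀ ℝ) × ℤ) : ‖eRT x y‖ = 1 :=
  abs_eRT x y

lemma eRT_ne_zero (x : (ℕ → ℝ) × Additive Circle) (y : (ℕ →₀ ℝ) × ℤ) : eRT x y ≠ 0 := by
  intro h
  have h2 := abs_eRT x y
  rw [h] at h2
  simp at h2

lemma eRT_add_left (x x' : (ℕ → ℝ) × Additive Circle) (y : (ℕ →₀ ℝ) × ℤ) :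
    eRT (x + x') y = eRT x y * eRT x' y := by
  simp only [eRT, charValRT, Prod.fst_add, Prod.snd_add, toMul_add, mul_zpow,
    Circle.coe_mul, pairSeq_add_left]
  push_cast
  rw [mul_add, Complex.exp_add]
  ring

lemma eRT_zero_left (y : (ℕ →₀ ℝ) × ℤ) : eRT 0 y = 1 := by
  simp [eRT, charValRT, pairSeq_zero_left]

lemma eRT_neg_left (x : (ℕ → ℝ) × Additive Circle) (y : (ℕ →₀ ℝ) × ℤ) :
    eRT (-x) y = (eRT x y)⁻¹ := by
  have h := eRT_add_left x (-x) y
  rw [add_neg_cancel, eRT_zero_left] at h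
  field_simp [eRT_ne_zero] at h ⊢
  linear_combination -h

lemma eRT_add_right (x : (ℕ → ℝ) × Additive Circle) (y y' : (ℕ →₀ ℝ) × ℤ) :
    eRT x (y + y') = eRT x y * eRT x y' := by
  simp only [eRT, charValRT, Prod.fst_add, Prod.snd_add, pairSeq_add_right, zpow_add,
    Circle.coe_mul]
  push_cast
  rw [mul_add, Complex.exp_add]
  ring

lemma eRT_zero_right (x : (ℕ → ℝ) × Additive Circle) : eRT x 0 = 1 := by
  simp [eRT, charValRT, pairSeq_zero_right]

lemma eRT_neg_right (x : (ℕ → ℝ) × Additive Circle) (y : (ℕ →₀ ℝ) × ℤ) :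
    eRT x (-y) = (eRT x y)⁻¹ := by
  have h := eRT_add_right x y (-y)
  rw [add_neg_cancel, eRT_zero_right] at h
  field_simp [eRT_ne_zero] at h ⊢
  linear_combination -h

lemma eRT_sub_right (x : (ℕ → ℝ) × Additive Circle) (y y' : (ℕ →₀ ℝ) × ℤ) :
    eRT x (y - y') = eRT x y * (eRT x y')⁻¹ := by
  rw [sub_eq_add_neg, eRT_add_right, eRT_neg_right]

lemma conj_eRT (x : (ℕ → ℝ) × Additive Circle) (y : (ℕ →₀ ℝ) × ℤ) :
    (starRingEnd ℂ) (eRT x y) = eRT x (-y) := by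
  rw [eRT_neg_right, Complex.inv_def, Complex.normSq_eq_norm_sq, abs_eRT]
  simp

lemma measurable_eRT (y : (ℕ →₀ ℝ) × ℤ) :
    Measurable fun x : (ℕ → ℝ) × Additive Circle => eRT x y := by
  apply Measurable.mul
  · apply Complex.continuous_exp.measurable.comp
    apply Measurable.const_mul
    apply Complex.measurable_ofReal.comp
    unfold pairSeq Finsupp.sum
    apply Finset.measurable_sum
    intro j _
    exact ((measurable_pi_apply j).comp measurable_fst).mul_const _
  · have hc : Continuous fun z : Circle => ((z ^ y.2 : Circle) : ℂ) :=
      continuous_subtype_val.comp (continuous_zpow y.2)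
    exact hc.measurable.comp measurable_snd

lemma pointwise_split (a b : (ℕ → ℝ) × Additive Circle) (u v : (ℕ →₀ ℝ) × ℤ) :
    eRT (a + b) u * eRT (a - b) v = eRT a (u + v) * eRT b (u - v) := by
  rw [eRT_add_left, sub_eq_add_neg, eRT_add_left, eRT_neg_left, eRT_add_right, eRT_sub_right]
  ring

/-- Product formula for integrals of independent complex random variables bounded by 1. -/
lemma indep_integral_mul_complex {Ω : Type} [MeasurableSpace Ω] {P : Measure Ω}
    [IsProbabilityMeasure P] {X Y : Ω → ℂ} (h : IndepFun X Y P)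
    (hX : Measurable X) (hY : Measurable Y)
    (hbX : ∀ ω, ‖X ω‖ ≤ 1) (hbY : ∀ ω, ‖Y ω‖ ≤ 1) :
    ∫ ω, X ω * Y ω ∂P = (∫ ω, X ω ∂P) * ∫ ω, Y ω ∂P := by
  set Xr : Ω → ℝ := fun ω => (X ω).re with hXr
  set Xi : Ω → ℝ := fun ω => (X ω).im with hXi
  set Yr : Ω → ℝ := fun ω => (Y ω).re with hYr
  set Yi : Ω → ℝ := fun ω => (Y ω).im with hYi
  have mXr : Measurable Xr := Complex.measurable_re.comp hX
  have mXi : Measurable Xi := Complex.measurable_im.comp hX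
  have mYr : Measurable Yr := Complex.measurable_re.comp hY
  have mYi : Measurable Yi := Complex.measurable_im.comp hY
  have bound : ∀ (Z : Ω → ℂ), (∀ ω, ‖Z ω‖ ≤ 1) → ∀ (f : ℂ → ℝ),
      (∀ z, |f z| ≤ ‖z‖) → ∀ ω, ‖f (Z ω)‖ ≤ 1 := fun Z hZ f hf ω =>
    le_trans (hf (Z ω)) (hZ ω)
  have int_of : ∀ (g : Ω → ℝ), Measurable g → (∀ ω, ‖g ω‖ ≤ 1) → Integrable g P := by
    intro g hg hb
    exact (integrable_const (1 : ℝ)).mono' hg.aestronglyMeasurable (ae_of_all _ hb)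
  have iXr : Integrable Xr P := int_of _ mXr (bound X hbX _ fun z => Complex.abs_re_le_norm z)
  have iXi : Integrable Xi P := int_of _ mXi (bound X hbX _ fun z => Complex.abs_im_le_norm z)
  have iYr : Integrable Yr P := int_of _ mYr (bound Y hbY _ fun z => Complex.abs_re_le_norm z)
  have iYi : Integrable Yi P := int_of _ mYi (bound Y hbY _ fun z => Complex.abs_im_le_norm z)
  have iX : Integrable X P :=
    (integrable_const (1 : ℝ)).mono' hX.aestronglyMeasurable (ae_of_all _ hbX)
  have iY : Integrable Y P :=
    (integrable_const (1 : ℝ)).mono' hY.aestronglyMeasurable (ae_of_all _ hbY)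
  have iXY : Integrable (fun ω => X ω * Y ω) P := by
    apply (integrable_const (1 : ℝ)).mono' (hX.mul hY).aestronglyMeasurable
    apply ae_of_all
    intro ω
    rw [Pi.mul_apply, norm_mul]
    exact mul_le_one₀ (hbX ω) (norm_nonneg _) (hbY ω)
  have key : ∀ (f g : Ω → ℝ), Measurable f → Measurable g → Integrable f P → Integrable g P →
      IndepFun f g P → ∫ ω, f ω * g ω ∂P = (∫ ω, f ω ∂P) * ∫ ω, g ω ∂P := by
    intro f g hf hg hif hig hind
    have := hind.integral_mul_eq_mul_integral hif.aestronglyMeasurable hig.aestronglyMeasurable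
    simpa [Pi.mul_apply] using this
  have hrr := key Xr Yr mXr mYr iXr iYr (h.comp Complex.measurable_re Complex.measurable_re)
  have hri := key Xr Yi mXr mYi iXr iYi (h.comp Complex.measurable_re Complex.measurable_im)
  have hir := key Xi Yr mXi mYr iXi iYr (h.comp Complex.measurable_im Complex.measurable_re)
  have hii := key Xi Yi mXi mYi iXi iYi (h.comp Complex.measurable_im Complex.measurable_im)
  have irr : Integrable (fun ω => Xr ω * Yr ω) P := by
    apply int_of _ (mXr.mul mYr)
    intro ω
    rw [Real.norm_eq_abs, Pi.mul_apply, abs_mul]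
    exact mul_le_one₀ (bound X hbX _ (fun z => Complex.abs_re_le_norm z) ω)
      (abs_nonneg _) (bound Y hbY _ (fun z => Complex.abs_re_le_norm z) ω)
  have iii : Integrable (fun ω => Xi ω * Yi ω) P := by
    apply int_of _ (mXi.mul mYi)
    intro ω
    rw [Real.norm_eq_abs, Pi.mul_apply, abs_mul]
    exact mul_le_one₀ (bound X hbX _ (fun z => Complex.abs_im_le_norm z) ω)
      (abs_nonneg _) (bound Y hbY _ (fun z => Complex.abs_im_le_norm z) ω)
  have iri : Integrable (fun ω => Xr ω * Yi ω) P := by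
    apply int_of _ (mXr.mul mYi)
    intro ω
    rw [Real.norm_eq_abs, Pi.mul_apply, abs_mul]
    exact mul_le_one₀ (bound X hbX _ (fun z => Complex.abs_re_le_norm z) ω)
      (abs_nonneg _) (bound Y hbY _ (fun z => Complex.abs_im_le_norm z) ω)
  have iir : Integrable (fun ω => Xi ω * Yr ω) P := by
    apply int_of _ (mXi.mul mYr)
    intro ω
    rw [Real.norm_eq_abs, Pi.mul_apply, abs_mul]
    exact mul_le_one₀ (bound X hbX _ (fun z => Complex.abs_im_le_norm z) ω)
      (abs_nonneg _) (bound Y hbY _ (fun z => Complex.abs_re_le_norm z) ω)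
  have hre : ∀ (f : Ω → ℂ), Integrable f P → ∫ ω, (f ω).re ∂P = (∫ ω, f ω ∂P).re := by
    intro f hf; simpa using integral_re (𝕜 := ℂ) hf
  have him : ∀ (f : Ω → ℂ), Integrable f P → ∫ ω, (f ω).im ∂P = (∫ ω, f ω ∂P).im := by
    intro f hf; simpa using integral_im (𝕜 := ℂ) hf
  apply Complex.ext
  · rw [← hre _ iXY]
    have h2 : (fun ω => (X ω * Y ω).re) = fun ω => Xr ω * Yr ω - Xi ω * Yi ω := by
      funext ω; exact Complex.mul_re _ _
    rw [h2, integral_sub irr iii, hrr, hii, Complex.mul_re,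
      ← hre _ iX, ← hre _ iY, ← him _ iX, ← him _ iY]
  · rw [← him _ iXY]
    have h2 : (fun ω => (X ω * Y ω).im) = fun ω => Xr ω * Yi ω + Xi ω * Yr ω := by
      funext ω; exact Complex.mul_im _ _
    rw [h2, integral_add iri iir, hri, hir, Complex.mul_im,
      ← hre _ iX, ← hre _ iY, ← him _ iX, ← him _ iY]

/-- Classification of continuous unitary characters of `ℝ`. -/
lemma real_char_classify {g : ℝ → ℂ} (hg : Continuous g) (h0 : g 0 = 1)
    (habs : ∀ r, ‖g r‖ = 1) (hadd : ∀ a b, g (a + b) = g a * g b) :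
    ∃ a : ℝ, ∀ r, g r = Complex.exp (Complex.I * a * r) := by
  obtain ⟨δ', hδ'pos, hδ'⟩ : ∃ δ > 0, ∀ x : ℝ, |x| < δ → ‖g x - 1‖ < 1/2 := by
    obtain ⟨δ, hδpos, hδ⟩ := Metric.continuousAt_iff.1 (hg.continuousAt (x := 0))
      (1/2) (by norm_num)
    refine ⟨δ, hδpos, fun x hx => ?_⟩
    have := hδ (x := x) (show dist x 0 < δ by simpa [Real.dist_eq] using hx)
    simpa [dist_eq_norm, h0] using this
  set δ := δ' / 2 with hδdef
  have hδpos : 0 < δ := by positivity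
  have hsmall : ∀ x ∈ Set.uIoc (0:ℝ) δ, ‖g x - 1‖ ≤ 1/2 := by
    intro x hx
    rw [Set.uIoc_of_le hδpos.le] at hx
    apply le_of_lt (hδ' x _)
    rw [abs_of_pos hx.1]
    calc x ≤ δ := hx.2
    _ < δ' := by rw [hδdef]; linarith
  set G : ℝ → ℂ := fun x => ∫ t in (0:ℝ)..x, g t with hGdef
  have hG : ∀ x, HasDerivAt G (g x) x := by
    intro x
    exact intervalIntegral.integral_hasDerivAt_right (hg.intervalIntegrable _ _)
      (hg.stronglyMeasurableAtFilter _ _) hg.continuousAt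
  have hGδ : G δ ≠ 0 := by
    have h1 : ‖G δ - δ‖ ≤ 1/2 * |δ - 0| := by
      have h2 : G δ - (δ:ℂ) = ∫ t in (0:ℝ)..δ, (g t - 1) := by
        rw [intervalIntegral.integral_sub (hg.intervalIntegrable _ _)
          intervalIntegrable_const]
        simp [hGdef]
      rw [h2]
      exact intervalIntegral.norm_integral_le_of_norm_le_const hsmall
    intro h
    rw [h, zero_sub, norm_neg, Complex.norm_real, Real.norm_eq_abs, sub_zero,
      abs_of_pos hδpos] at h1
    linarith
  have key : ∀ x, g x * G δ = G (x + δ) - G x := by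
    intro x
    have h1 : G (x + δ) - G x = ∫ t in x..(x+δ), g t := by
      have h := intervalIntegral.integral_add_adjacent_intervals (μ := volume) (a := (0:ℝ))
        (b := x) (c := x + δ) (hg.intervalIntegrable _ _) (hg.intervalIntegrable _ _)
      simp only [hGdef]
      rw [← h]; ring
    have h2 : (∫ t in x..(x+δ), g t) = ∫ t in (0:ℝ)..δ, g (x + t) := by
      rw [intervalIntegral.integral_comp_add_left (fun t => g t) x]
      simp
    have h3 : (∫ t in (0:ℝ)..δ, g (x + t)) = g x * ∫ t in (0:ℝ)..δ, g t := by
      rw [← intervalIntegral.integral_const_mul]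
      apply intervalIntegral.integral_congr
      intro t _
      exact hadd x t
    rw [h1, h2, h3]
  set c : ℂ := (g δ - 1) * (G δ)⁻¹ with hc
  have hderiv : ∀ x, HasDerivAt g (c * g x) x := by
    intro x
    have hgx : g = fun x => (G (x + δ) - G x) * (G δ)⁻¹ := by
      funext x
      rw [← key x]
      field_simp
    have d1 : HasDerivAt (fun x => G (x + δ)) (g (x + δ)) x :=
      HasDerivAt.comp_add_const x δ (hG (x + δ))
    have d2 : HasDerivAt (fun x => (G (x + δ) - G x) * (G δ)⁻¹)
        ((g (x + δ) - g x) * (G δ)⁻¹) x := (d1.sub (hG x)).mul_const _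
    rw [← hgx] at d2
    have h3 : (g (x + δ) - g x) * (G δ)⁻¹ = c * g x := by
      rw [hadd x δ, hc]; ring
    rwa [h3] at d2
  have hsol : ∀ x, g x = Complex.exp (c * x) := by
    have hu : ∀ x, HasDerivAt (fun x : ℝ => g x * Complex.exp (-(c * x))) 0 x := by
      intro x
      have d1 : HasDerivAt (fun x : ℝ => -(c * x)) (-c) x := by
        have hd : HasDerivAt (fun x : ℝ => (x : ℂ)) 1 x := Complex.ofRealCLM.hasDerivAt
        exact (hd.const_mul c).neg.congr_deriv (by simp)
      have d2 : HasDerivAt (fun x : ℝ => Complex.exp (-(c * x)))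
          (-c * Complex.exp (-(c * x))) x := by
        exact ((Complex.hasDerivAt_exp _).comp x d1).congr_deriv (by ring)
      have d3 := (hderiv x).mul d2
      refine d3.congr_deriv ?_
      ring
    have hconst : ∀ x, g x * Complex.exp (-(c * x)) = g 0 * Complex.exp (-(c * 0)) := by
      intro x
      exact is_const_of_deriv_eq_zero (fun y => (hu y).differentiableAt)
        (fun y => (hu y).deriv) x 0
    intro x
    have h2 := hconst x
    rw [h0, one_mul] at h2
    norm_num at h2
    calc g x = g x * (Complex.exp (-(c * x)) * Complex.exp (c * x)) := by
          rw [← Complex.exp_add]; simp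
    _ = (g x * Complex.exp (-(c * x))) * Complex.exp (c * x) := by ring
    _ = Complex.exp (c * x) := by rw [h2, one_mul]
  have hcre : c.re = 0 := by
    have h1 := habs 1
    rw [hsol 1, Complex.norm_exp] at h1
    have h2 : (c * ((1:ℝ):ℂ)).re = 0 := by
      have h3 := congrArg Real.log h1
      rwa [Real.log_exp, Real.log_one] at h3
    simpa using h2
  refine ⟨c.im, fun r => ?_⟩
  rw [hsol r]
  congr 1
  apply Complex.ext <;> simp [hcre]

/-- Multiplicative solutions of Jensen's equation on `ℤ` are geometric. -/
lemma int_jensen_hom {w : ℤ → ℂ} (h0 : w 0 = 1) (hne : ∀ n, w n ≠ 0)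
    (hrec : ∀ n : ℤ, w (n + 1) * w (n - 1) = w n ^ 2) :
    ∀ n : ℤ, w n = (w 1) ^ n := by
  have c_ne : w 1 ≠ 0 := hne 1
  have solve : ∀ (p q x : ℤ), w x * w 1 ^ p = w 1 ^ q → w x = w 1 ^ (q - p) := by
    intro p q x h
    rw [zpow_sub₀ c_ne, ← h, mul_div_assoc, div_self (zpow_ne_zero _ c_ne), mul_one]
  have key : ∀ n : ℤ, w n = w 1 ^ n ∧ w (n + 1) = w 1 ^ (n + 1) := by
    intro n
    induction n using Int.induction_on with
    | zero => constructor <;> simp [h0]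
    | succ i ih =>
        refine ⟨ih.2, ?_⟩
        have h := hrec ((i : ℤ) + 1)
        rw [add_sub_cancel_right, ih.1, ih.2] at h
        have h2 : w ((i:ℤ) + 1 + 1) * w 1 ^ (i:ℤ) = w 1 ^ ((i:ℤ) + 1 + ((i:ℤ) + 1)) := by
          rw [zpow_add₀ c_ne ((i:ℤ)+1) ((i:ℤ)+1), ← sq, h]
        have h3 := solve (i:ℤ) ((i:ℤ) + 1 + ((i:ℤ) + 1)) _ h2
        rw [h3]
        congr 1
        ring
    | pred i ih =>
        have hfix : -(i:ℤ) - 1 + 1 = -(i:ℤ) := by ring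
        refine ⟨?_, by rw [hfix]; exact ih.1⟩
        have h := hrec (-(i : ℤ))
        rw [ih.2, ih.1] at h
        have h2 : w (-(i:ℤ) - 1) * w 1 ^ (-(i:ℤ) + 1) = w 1 ^ (-(i:ℤ) + -(i:ℤ)) := by
          rw [zpow_add₀ c_ne (-(i:ℤ)) (-(i:ℤ)), ← sq, ← h, mul_comm]
        have h3 := solve _ _ _ h2
        rw [h3]
        congr 1
        ring
  intro n
  exact (key n).1

lemma pairSeq_sum (t : ℕ → ℝ) {ι : Type*} (A : Finset ι) (f : ι → (ℕ →₀ ℝ)) :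
    pairSeq t (∑ i ∈ A, f i) = ∑ i ∈ A, pairSeq t (f i) := by
  classical
  induction A using Finset.induction_on with
  | empty => simp [pairSeq_zero_right]
  | insert _ _ hnot ih =>
      rw [Finset.sum_insert hnot, Finset.sum_insert hnot, pairSeq_add_right, ih]

lemma pairSeq_finsuppOfFin (t : ℕ → ℝ) {N : ℕ} (v : Fin N → ℝ) :
    pairSeq t (finsuppOfFin v) = ∑ i : Fin N, t i * v i := by
  rw [finsuppOfFin, pairSeq_sum]
  exact Finset.sum_congr rfl fun i _ => pairSeq_single t i (v i)

lemma finsuppOfFin_single (j : ℕ) (r : ℝ) :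
    finsuppOfFin (fun i : Fin (j + 1) => if (i : ℕ) = j then r else 0)
      = Finsupp.single j r := by
  classical
  rw [finsuppOfFin]
  rw [Finset.sum_eq_single (⟨j, Nat.lt_succ_self j⟩ : Fin (j + 1))]
  · simp
  · intro i _ hne
    have h : (i : ℕ) ≠ j := fun h => hne (Fin.ext h)
    simp [h]
  · intro h
    exact absurd (Finset.mem_univ _) h

lemma continuous_charFn_slice (μ : Measure ((ℕ → ℝ) × Additive Circle))
    [IsProbabilityMeasure μ] (N : ℕ) (k : ℤ) :
    Continuous fun v : Fin N → ℝ => charFnRT μ (finsuppOfFin v) k := by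
  have h0 : (fun v : Fin N → ℝ => charFnRT μ (finsuppOfFin v) k)
      = fun v => ∫ x, eRT x (finsuppOfFin v, k) ∂μ := rfl
  rw [h0]
  apply continuous_of_dominated (bound := fun _ => (1 : ℝ))
  · intro v
    exact (measurable_eRT _).aestronglyMeasurable
  · intro v
    exact ae_of_all _ fun x => le_of_eq (norm_eRT _ _)
  · exact integrable_const 1
  · apply ae_of_all
    intro x
    have h1 : Continuous fun v : Fin N → ℝ =>
        Complex.exp (Complex.I * (pairSeq x.1 (finsuppOfFin v) : ℂ)) := by
      apply Complex.continuous_exp.comp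
      apply Continuous.mul continuous_const
      apply Complex.continuous_ofReal.comp
      have h2 : (fun v : Fin N → ℝ => pairSeq x.1 (finsuppOfFin v))
          = fun v => ∑ i : Fin N, x.1 i * v i := by
        funext v; exact pairSeq_finsuppOfFin x.1 v
      rw [h2]
      exact continuous_finset_sum _ fun i _ => continuous_const.mul (continuous_apply i)
    have h3 : (fun v : Fin N → ℝ => eRT x (finsuppOfFin v, k))
        = fun v => Complex.exp (Complex.I * (pairSeq x.1 (finsuppOfFin v) : ℂ)) *
            ((x.2.toMul ^ k : Circle) : ℂ) := rfl
    rw [h3]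
    exact h1.mul continuous_const

instance : MeasurableMul₂ Circle := ⟨continuous_mul.measurable⟩
instance : MeasurableDiv₂ Circle := ⟨continuous_div'.measurable⟩
instance : MeasurableAdd₂ (Additive Circle) :=
  ⟨(measurable_mul : Measurable fun p : Circle × Circle => p.1 * p.2)⟩
instance : MeasurableSub₂ (Additive Circle) :=
  ⟨(measurable_div : Measurable fun p : Circle × Circle => p.1 / p.2)⟩

end Aux

set_option maxHeartbeats 1000000 in
/-- **Lemma 11.**  Let `X = ℝ^ℵ₀ × 𝕋`.  Let `ξ₁, ξ₂` be independent identically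
distributed random variables with values in `X` and distribution `μ` whose characteristic
function does not vanish.  If `L₁ = ξ₁ + ξ₂` and `L₂ = ξ₁ − ξ₂` are independent, then `μ`
is Gaussian. -/
theorem gaussian_of_sum_diff_indep_RN_times_circle
    {Ω : Type} [MeasurableSpace Ω] (P : Measure Ω) [IsProbabilityMeasure P]
    (ξ₁ ξ₂ : Ω → (ℕ → ℝ) × Additive Circle)
    (hξ₁ : Measurable ξ₁) (hξ₂ : Measurable ξ₂)
    (hindep : IndepFun ξ₁ ξ₂ P)
    (μ : Measure ((ℕ → ℝ) × Additive Circle)) (hμ₁ : μ = P.map ξ₁) (hμ₂ : μ = P.map ξ₂)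
    (hnv : ∀ (s : ℕ →₀ ℝ) (n : ℤ), charFnRT μ s n ≠ 0)
    (hL : IndepFun (fun ω => ξ₁ ω + ξ₂ ω) (fun ω => ξ₁ ω - ξ₂ ω) P) :
    IsGaussianRT μ := by
  classical
  haveI hprob : IsProbabilityMeasure μ := by
    rw [hμ₁]; exact Measure.isProbabilityMeasure_map hξ₁.aemeasurable
  set F : (ℕ →₀ ℝ) × ℤ → ℂ := fun y => charFnRT μ y.1 y.2 with hFdef
  have hne : ∀ y, F y ≠ 0 := fun y => hnv y.1 y.2
  -- characteristic function via ξ₁ and ξ₂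
  have hF₁ : ∀ y, F y = ∫ ω, eRT (ξ₁ ω) y ∂P := by
    intro y
    show (∫ x, eRT x y ∂μ) = _
    rw [hμ₁, integral_map hξ₁.aemeasurable (measurable_eRT y).aestronglyMeasurable]
  have hF₂ : ∀ y, F y = ∫ ω, eRT (ξ₂ ω) y ∂P := by
    intro y
    show (∫ x, eRT x y ∂μ) = _
    rw [hμ₂, integral_map hξ₂.aemeasurable (measurable_eRT y).aestronglyMeasurable]
  -- the functional equation
  have hfe : ∀ u v : (ℕ →₀ ℝ) × ℤ,
      F (u + v) * F (u - v) = F u ^ 2 * (F v * F (-v)) := by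
    intro u v
    have e1 : ∫ ω, eRT (ξ₁ ω) (u+v) * eRT (ξ₂ ω) (u-v) ∂P = F (u+v) * F (u-v) := by
      rw [indep_integral_mul_complex (X := fun ω => eRT (ξ₁ ω) (u+v))
        (Y := fun ω => eRT (ξ₂ ω) (u-v))
        (hindep.comp (measurable_eRT (u+v)) (measurable_eRT (u-v)))
        ((measurable_eRT (u+v)).comp hξ₁) ((measurable_eRT (u-v)).comp hξ₂)
        (fun ω => le_of_eq (norm_eRT _ _)) (fun ω => le_of_eq (norm_eRT _ _)),
        ← hF₁, ← hF₂]
    have hmadd : Measurable fun ω => ξ₁ ω + ξ₂ ω := by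
      show Measurable fun ω => ((ξ₁ ω).1 + (ξ₂ ω).1, (ξ₁ ω).2 + (ξ₂ ω).2)
      exact ((hξ₁.fst.add hξ₂.fst)).prodMk ((hξ₁.snd.add hξ₂.snd))
    have hmsub : Measurable fun ω => ξ₁ ω - ξ₂ ω := by
      show Measurable fun ω => ((ξ₁ ω).1 - (ξ₂ ω).1, (ξ₁ ω).2 - (ξ₂ ω).2)
      exact ((hξ₁.fst.sub hξ₂.fst)).prodMk ((hξ₁.snd.sub hξ₂.snd))
    have e2 : ∫ ω, eRT (ξ₁ ω + ξ₂ ω) u * eRT (ξ₁ ω - ξ₂ ω) v ∂P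
        = F u ^ 2 * (F v * F (-v)) := by
      rw [indep_integral_mul_complex (X := fun ω => eRT (ξ₁ ω + ξ₂ ω) u)
        (Y := fun ω => eRT (ξ₁ ω - ξ₂ ω) v)
        (hL.comp (measurable_eRT u) (measurable_eRT v))
        ((measurable_eRT u).comp hmadd) ((measurable_eRT v).comp hmsub)
        (fun ω => le_of_eq (norm_eRT _ _)) (fun ω => le_of_eq (norm_eRT _ _))]
      have e3 : ∫ ω, eRT (ξ₁ ω + ξ₂ ω) u ∂P = F u * F u := by
        have : ∀ ω, eRT (ξ₁ ω + ξ₂ ω) u = eRT (ξ₁ ω) u * eRT (ξ₂ ω) u := by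
          intro ω; exact eRT_add_left _ _ _
        rw [integral_congr_ae (ae_of_all _ this),
          indep_integral_mul_complex (X := fun ω => eRT (ξ₁ ω) u)
            (Y := fun ω => eRT (ξ₂ ω) u)
            (hindep.comp (measurable_eRT u) (measurable_eRT u))
            ((measurable_eRT u).comp hξ₁) ((measurable_eRT u).comp hξ₂)
            (fun ω => le_of_eq (norm_eRT _ _)) (fun ω => le_of_eq (norm_eRT _ _)),
          ← hF₁, ← hF₂]
      have e4 : ∫ ω, eRT (ξ₁ ω - ξ₂ ω) v ∂P = F v * F (-v) := by
        have : ∀ ω, eRT (ξ₁ ω - ξ₂ ω) v = eRT (ξ₁ ω) v * eRT (ξ₂ ω) (-v) := by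
          intro ω
          rw [sub_eq_add_neg, eRT_add_left, eRT_neg_left, eRT_neg_right]
        rw [integral_congr_ae (ae_of_all _ this),
          indep_integral_mul_complex (X := fun ω => eRT (ξ₁ ω) v)
            (Y := fun ω => eRT (ξ₂ ω) (-v))
            (hindep.comp (measurable_eRT v) (measurable_eRT (-v)))
            ((measurable_eRT v).comp hξ₁) ((measurable_eRT (-v)).comp hξ₂)
            (fun ω => le_of_eq (norm_eRT _ _)) (fun ω => le_of_eq (norm_eRT _ _)),
          ← hF₁, ← hF₂]
      rw [e3, e4]
      ring
    rw [← e1, ← e2]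
    apply integral_congr_ae
    apply ae_of_all
    intro ω
    exact (pointwise_split (ξ₁ ω) (ξ₂ ω) u v).symm
  -- basic properties of F
  have hF0 : F 0 = 1 := by
    show (∫ x, eRT x 0 ∂μ) = 1
    rw [integral_congr_ae (ae_of_all _ fun x => eRT_zero_right x)]
    simp
  have habs_le : ∀ y, ‖F y‖ ≤ 1 := by
    intro y
    show ‖∫ x, eRT x y ∂μ‖ ≤ 1
    calc ‖∫ x, eRT x y ∂μ‖ ≤ ∫ x, ‖eRT x y‖ ∂μ := norm_integral_le_integral_norm _
    _ = 1 := by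
        rw [integral_congr_ae (ae_of_all _ fun x => norm_eRT x y)]
        simp
  have hFconj : ∀ y, F (-y) = (starRingEnd ℂ) (F y) := by
    intro y
    show (∫ x, eRT x (-y) ∂μ) = (starRingEnd ℂ) (∫ x, eRT x y ∂μ)
    rw [← integral_conj]
    exact integral_congr_ae (ae_of_all _ fun x => (conj_eRT x y).symm)
  have hRpos : ∀ y, 0 < ‖F y‖ := fun y => norm_pos_iff.2 (hne y)
  -- the phase function
  set h : (ℕ →₀ ℝ) × ℤ → ℂ := fun y => F y / (‖F y‖ : ℂ) with hhdef
  have hcast_ne : ∀ y, ((‖F y‖ : ℝ) : ℂ) ≠ 0 :=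
    fun y => Complex.ofReal_ne_zero.2 (ne_of_gt (hRpos y))
  have hh_ne : ∀ y, h y ≠ 0 := fun y => div_ne_zero (hne y) (hcast_ne y)
  have habs_h : ∀ y, ‖h y‖ = 1 := by
    intro y
    rw [hhdef]
    simp only [norm_div, Complex.norm_real, norm_norm]
    exact div_self (ne_of_gt (hRpos y))
  have hFh : ∀ y, F y = h y * (‖F y‖ : ℂ) :=
    fun y => (div_mul_cancel₀ (F y) (hcast_ne y)).symm
  have hh0 : h 0 = 1 := by
    rw [hhdef]
    simp [hF0]
  -- h satisfies Jensen's equation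
  have hRfe : ∀ u v : (ℕ →₀ ℝ) × ℤ, ‖F (u+v)‖ * ‖F (u-v)‖
      = ‖F u‖ ^ 2 * ‖F v‖ ^ 2 := by
    intro u v
    have h1 := congrArg norm (hfe u v)
    rw [norm_mul, norm_mul, norm_pow, norm_mul, hFconj v, Complex.norm_conj] at h1
    rw [h1]
    ring
  have hJ : ∀ u v : (ℕ →₀ ℝ) × ℤ, h (u+v) * h (u-v) = h u ^ 2 := by
    intro u v
    have hcst : F v * F (-v) = ((‖F v‖ : ℝ) : ℂ) ^ 2 := by
      rw [hFconj v, Complex.mul_conj, Complex.normSq_eq_norm_sq]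
      push_cast
      ring
    have key := hfe u v
    rw [hcst, hFh (u+v), hFh (u-v), hFh u] at key
    have hABne : ((‖F (u+v)‖ : ℝ) : ℂ) * ((‖F (u-v)‖ : ℝ) : ℂ) ≠ 0 :=
      mul_ne_zero (hcast_ne _) (hcast_ne _)
    apply mul_right_cancel₀ hABne
    have hcastR : ((‖F (u+v)‖ : ℝ) : ℂ) * ((‖F (u-v)‖ : ℝ) : ℂ)
        = ((‖F u‖ : ℝ) : ℂ) ^ 2 * ((‖F v‖ : ℝ) : ℂ) ^ 2 := by
      have h9 := hRfe u v
      exact_mod_cast h9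
    calc h (u+v) * h (u-v) * (((‖F (u+v)‖ : ℝ) : ℂ) * ((‖F (u-v)‖ : ℝ) : ℂ))
        = (h (u+v) * ((‖F (u+v)‖ : ℝ) : ℂ)) *
          (h (u-v) * ((‖F (u-v)‖ : ℝ) : ℂ)) := by ring
    _ = (h u * ((‖F u‖ : ℝ) : ℂ)) ^ 2 * ((‖F v‖ : ℝ) : ℂ) ^ 2 := key
    _ = h u ^ 2 * (((‖F u‖ : ℝ) : ℂ) ^ 2 * ((‖F v‖ : ℝ) : ℂ) ^ 2) := by
        ring
    _ = h u ^ 2 * (((‖F (u+v)‖ : ℝ) : ℂ) * ((‖F (u-v)‖ : ℝ) : ℂ)) := by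
        rw [hcastR]
  -- h is a homomorphism on the first factor
  have half_add : ∀ s s' : ℕ →₀ ℝ, (2⁻¹ : ℝ) • (s + s') + (2⁻¹ : ℝ) • (s - s') = s := by
    intro s s'
    ext j
    simp only [Finsupp.coe_add, Finsupp.coe_smul, Finsupp.coe_sub, Pi.add_apply,
      Pi.smul_apply, Pi.sub_apply, smul_eq_mul]
    ring
  have half_sub : ∀ s s' : ℕ →₀ ℝ, (2⁻¹ : ℝ) • (s + s') - (2⁻¹ : ℝ) • (s - s') = s' := by
    intro s s'
    ext j
    simp only [Finsupp.coe_add, Finsupp.coe_smul, Finsupp.coe_sub, Pi.add_apply,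
      Pi.smul_apply, Pi.sub_apply, smul_eq_mul]
    ring
  have half_self : ∀ s : ℕ →₀ ℝ, (2⁻¹ : ℝ) • s + (2⁻¹ : ℝ) • s = s := by
    intro s
    ext j
    simp only [Finsupp.coe_add, Finsupp.coe_smul, Pi.add_apply, Pi.smul_apply, smul_eq_mul]
    ring
  have hS : ∀ s s' : ℕ →₀ ℝ, h (s + s', 0) = h (s, 0) * h (s', 0) := by
    intro s s'
    have h1 := hJ ((2⁻¹ : ℝ) • (s + s'), (0:ℤ)) ((2⁻¹ : ℝ) • (s - s'), (0:ℤ))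
    have h2 := hJ ((2⁻¹ : ℝ) • (s + s'), (0:ℤ)) ((2⁻¹ : ℝ) • (s + s'), (0:ℤ))
    rw [show ((2⁻¹ : ℝ) • (s + s'), (0:ℤ)) + ((2⁻¹ : ℝ) • (s - s'), (0:ℤ)) = (s, (0:ℤ)) by
        rw [Prod.mk_add_mk, half_add, add_zero],
      show ((2⁻¹ : ℝ) • (s + s'), (0:ℤ)) - ((2⁻¹ : ℝ) • (s - s'), (0:ℤ)) = (s', (0:ℤ)) by
        rw [Prod.mk_sub_mk, half_sub, sub_zero]] at h1
    rw [show ((2⁻¹ : ℝ) • (s + s'), (0:ℤ)) + ((2⁻¹ : ℝ) • (s + s'), (0:ℤ)) = (s + s', (0:ℤ)) by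
        rw [Prod.mk_add_mk, half_self, add_zero],
      show ((2⁻¹ : ℝ) • (s + s'), (0:ℤ)) - ((2⁻¹ : ℝ) • (s + s'), (0:ℤ)) = ((0 : ℕ →₀ ℝ), (0:ℤ)) by
        rw [Prod.mk_sub_mk, sub_self, sub_zero],
      show ((0 : ℕ →₀ ℝ), (0:ℤ)) = (0 : (ℕ →₀ ℝ) × ℤ) from rfl, hh0, mul_one] at h2
    rw [h2, ← h1]
  -- h on the second factor
  set c : ℂ := h (0, 1) with hcdef
  have hZ : ∀ n : ℤ, h (0, n) = c ^ n := by
    have := int_jensen_hom (w := fun n : ℤ => h (0, n)) hh0 (fun n => hh_ne (0, n)) ?_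
    · exact this
    · intro n
      have h1 := hJ ((0 : ℕ →₀ ℝ), n) ((0 : ℕ →₀ ℝ), 1)
      rw [show ((0 : ℕ →₀ ℝ), n) + ((0 : ℕ →₀ ℝ), 1) = ((0 : ℕ →₀ ℝ), n + 1) by
          rw [Prod.mk_add_mk, add_zero],
        show ((0 : ℕ →₀ ℝ), n) - ((0 : ℕ →₀ ℝ), 1) = ((0 : ℕ →₀ ℝ), n - 1) by
          rw [Prod.mk_sub_mk, sub_zero]] at h1
      exact h1
  have hc_ne : c ≠ 0 := hh_ne (0, 1)
  -- h splits
  have hsq : ∀ (s : ℕ →₀ ℝ) (n : ℤ), h (s, n) ^ 2 = h (s, 0) ^ 2 * (c ^ n) ^ 2 := by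
    intro s n
    have h1 := hJ (s, n) (s, -n)
    rw [show (s, n) + (s, -n) = (s + s, (0:ℤ)) by rw [Prod.mk_add_mk, add_neg_cancel],
      show (s, n) - (s, -n) = ((0 : ℕ →₀ ℝ), n + n) by
        rw [Prod.mk_sub_mk, sub_self, sub_neg_eq_add]] at h1
    rw [hS s s, hZ (n + n)] at h1
    rw [← h1, zpow_add₀ hc_ne]
    ring
  have hmix : ∀ (s : ℕ →₀ ℝ) (n : ℤ), h (s, n) = h (s, 0) * c ^ n := by
    intro s n
    have h1 := hJ ((2⁻¹ : ℝ) • s, n) ((2⁻¹ : ℝ) • s, (0:ℤ))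
    rw [show ((2⁻¹ : ℝ) • s, n) + ((2⁻¹ : ℝ) • s, (0:ℤ)) = (s, n) by
        rw [Prod.mk_add_mk, half_self, add_zero],
      show ((2⁻¹ : ℝ) • s, n) - ((2⁻¹ : ℝ) • s, (0:ℤ)) = ((0 : ℕ →₀ ℝ), n) by
        rw [Prod.mk_sub_mk, sub_self, sub_zero]] at h1
    rw [hZ n] at h1
    -- h1 : h (s, n) * c ^ n = h (2⁻¹ • s, n) ^ 2
    have h2 := hsq ((2⁻¹ : ℝ) • s) n
    have h3 : h ((2⁻¹ : ℝ) • s, 0) ^ 2 = h (s, 0) := by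
      rw [sq, ← hS, half_self]
    rw [h3] at h2
    have h5 : c ^ n ≠ 0 := zpow_ne_zero _ hc_ne
    apply mul_right_cancel₀ h5
    rw [h1, h2]
    ring
  -- continuity of h on finite-dimensional slices
  have hFcont : ∀ (N : ℕ) (k : ℤ), Continuous fun v : Fin N → ℝ => F (finsuppOfFin v, k) :=
    fun N k => continuous_charFn_slice μ N k
  have hhcont : ∀ (N : ℕ) (k : ℤ), Continuous fun v : Fin N → ℝ => h (finsuppOfFin v, k) := by
    intro N k
    apply Continuous.div (hFcont N k)
    · exact Complex.continuous_ofReal.comp (continuous_norm.comp (hFcont N k))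
    · intro v
      exact hcast_ne _
  -- classify each coordinate character
  have hexists : ∀ j : ℕ, ∃ a : ℝ, ∀ r : ℝ,
      h (Finsupp.single j r, 0) = Complex.exp (Complex.I * a * r) := by
    intro j
    apply real_char_classify
    · have hc1 : Continuous fun r : ℝ => (fun i : Fin (j+1) => if (i : ℕ) = j then r else 0) := by
        apply continuous_pi
        intro i
        by_cases hij : (i : ℕ) = j
        · simp only [if_pos hij]; exact continuous_id
        · simpa [hij] using continuous_const
      have := (hhcont (j+1) 0).comp hc1
      convert this using 1
      funext r
      rw [Function.comp_apply, finsuppOfFin_single]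
    · rw [Finsupp.single_zero]
      exact hh0
    · intro r
      exact habs_h _
    · intro a b
      rw [Finsupp.single_add]
      exact hS _ _
  choose t₀ ht₀ using hexists
  -- h on the first factor is the character of t₀
  have hs0 : ∀ s : ℕ →₀ ℝ, h (s, 0) = Complex.exp (Complex.I * (pairSeq t₀ s : ℂ)) := by
    intro s
    induction s using Finsupp.induction with
    | zero => rw [pairSeq_zero_right]; simpa using (show h (0, 0) = 1 from hh0)
    | single_add a b f ha hb ih =>
        rw [hS, ht₀ a b, ih, ← Complex.exp_add, pairSeq_add_right, pairSeq_single]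
        congr 1
        push_cast
        ring
  -- the circle element for the second factor
  have hcabs : ‖c‖ = 1 := habs_h (0, 1)
  set z₀ : Circle := ⟨c, by
    show c ∈ Metric.sphere (0:ℂ) 1
    rw [mem_sphere_zero_iff_norm]
    exact hcabs⟩ with hz₀def
  -- assemble
  refine ⟨hprob, ((t₀, Additive.ofMul z₀) : (ℕ → ℝ) × Additive Circle),
    fun y => - Real.log (‖F y‖), ?_, ?_, ?_, ?_⟩
  · intro y
    show 0 ≤ -Real.log (‖F y‖)
    rw [neg_nonneg]
    exact Real.log_nonpos (hRpos y).le (habs_le y)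
  · intro N k
    show Continuous fun v : Fin N → ℝ => -Real.log (‖F (finsuppOfFin v, k)‖)
    apply Continuous.neg
    apply Continuous.log
    · exact continuous_norm.comp (hFcont N k)
    · intro v
      exact ne_of_gt (hRpos _)
  · intro u v
    show -Real.log (‖F (u+v)‖) + -Real.log (‖F (u-v)‖)
        = 2 * (-Real.log (‖F u‖) + -Real.log (‖F v‖))
    have h1 : Real.log (‖F (u+v)‖ * ‖F (u-v)‖)
        = Real.log (‖F u‖ ^ 2 * ‖F v‖ ^ 2) := by
      rw [hRfe u v]
    rw [Real.log_mul (ne_of_gt (hRpos _)) (ne_of_gt (hRpos _)),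
      Real.log_mul (pow_ne_zero _ (ne_of_gt (hRpos _))) (pow_ne_zero _ (ne_of_gt (hRpos _))),
      Real.log_pow, Real.log_pow] at h1
    push_cast at h1
    linarith
  · intro s n
    have hval : charValRT ((t₀, Additive.ofMul z₀) : (ℕ → ℝ) × Additive Circle) s n
        = Complex.exp (Complex.I * (pairSeq t₀ s : ℂ)) * c ^ n := by
      show Complex.exp (Complex.I * (pairSeq t₀ s : ℂ)) *
          ((((Additive.ofMul z₀).toMul) ^ n : Circle) : ℂ) = _
      rw [toMul_ofMul, Circle.coe_zpow']
    have hexp : ((‖F (s, n)‖ : ℝ) : ℂ)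
        = Complex.exp (-((- Real.log (‖F (s, n)‖) : ℝ) : ℂ)) := by
      rw [Complex.ofReal_neg, neg_neg, ← Complex.ofReal_exp, Real.exp_log (hRpos _)]
    calc charFnRT μ s n
        = h (s, n) * ((‖F (s, n)‖ : ℝ) : ℂ) := hFh (s, n)
    _ = (Complex.exp (Complex.I * (pairSeq t₀ s : ℂ)) * c ^ n) *
        Complex.exp (-((- Real.log (‖F (s, n)‖) : ℝ) : ℂ)) := by
          rw [hmix s n, hs0 s, ← hexp]
    _ = charValRT ((t₀, Additive.ofMul z₀) : (ℕ → ℝ) × Additive Circle) s n *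
        Complex.exp (-((- Real.log (‖F (s, n)‖) : ℝ) : ℂ)) := by rw [hval]
end

section
/- Let Y = ℝ^b × ℤ and H = ℝ^b × 2ℤ = Y^{(2)}. Suppose l_1, l_2 : Y → ℂ are functions with |l_j(y)| = 1 and l_j(−y) equal to the complex conjugate of l_j(y) for all y ∈ Y, such that l_j(y) = 1 for all y ∈ H and l_j(u+v) l_j(u−v) = 1 for all u ∈ H and v ∈ Y. Then l_j(s, n) = l_j(0, n) for all s ∈ ℝ^b and n ∈ ℤ; if in addition l_1 and l_2 satisfy l_1(u+v) l_2(u+εv) = l_1(u) l_1(v) l_2(u) l_2(εv) for all u, v ∈ Y, where ε(s, n) = (αs + nv_0, −n) for some α ∈ Aut(ℝ^b) and v_0 ∈ ℝ^b, then l_1 and l_2 are characters of the group Y. -/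
section Aux
variable {b : ℕ}

lemma aux_ne (l : (Fin b → ℝ) × ℤ → ℂ) (hm : ∀ y, ‖l y‖ = 1) (y) : l y ≠ 0 := by
  intro h
  have := hm y
  rw [h] at this
  simp at this

lemma aux_conj_inv (l : (Fin b → ℝ) × ℤ → ℂ) (hm : ∀ y, ‖l y‖ = 1) (y) :
    starRingEnd ℂ (l y) = (l y)⁻¹ := by
  have h1 : l y * starRingEnd ℂ (l y) = 1 := by
    rw [Complex.mul_conj]
    norm_cast
    rw [Complex.normSq_eq_norm_sq, hm y]; norm_num
  exact (inv_eq_of_mul_eq_one_right h1).symm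

lemma aux_const (l : (Fin b → ℝ) × ℤ → ℂ) (hm : ∀ y, ‖l y‖ = 1)
    (hc : ∀ y, l (-y) = starRingEnd ℂ (l y))
    (hH : ∀ u v : (Fin b → ℝ) × ℤ, Even u.2 → l (u + v) * l (u - v) = 1) :
    ∀ s : Fin b → ℝ, ∀ n : ℤ, l (s, n) = l (0, n) := by
  intro s n
  have h := hH ((1/2:ℝ) • s, 0) ((1/2:ℝ) • s, n) (Even.zero)
  have e1 : ((1/2:ℝ) • s, (0:ℤ)) + ((1/2:ℝ) • s, n) = (s, n) := by
    rw [Prod.mk_add_mk, ← add_smul]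
    norm_num
  have e2 : ((1/2:ℝ) • s, (0:ℤ)) - ((1/2:ℝ) • s, n) = -((0 : Fin b → ℝ), n) := by
    rw [Prod.mk_sub_mk]
    simp
  rw [e1, e2, hc, aux_conj_inv l hm] at h
  exact (mul_inv_eq_one₀ (aux_ne l hm _)).mp h

lemma aux_pow (l : (Fin b → ℝ) × ℤ → ℂ) (hm : ∀ y, ‖l y‖ = 1)
    (hc : ∀ y, l (-y) = starRingEnd ℂ (l y))
    (hone : ∀ s : Fin b → ℝ, ∀ n : ℤ, Even n → l (s, n) = 1)
    (hH : ∀ u v : (Fin b → ℝ) × ℤ, Even u.2 → l (u + v) * l (u - v) = 1)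
    (hsq : l (0, 1) * l (0, 1) = 1) :
    ∀ s : Fin b → ℝ, ∀ n : ℤ, l (s, n) = l (0, 1) ^ n := by
  set c : ℂ := l (0, 1) with hcdef
  have cne : c ≠ 0 := aux_ne l hm _
  have cinv : c⁻¹ = c := inv_eq_of_mul_eq_one_right hsq
  have rel : ∀ k : ℤ, l (0, 2*k+1) * l (0, 2*k-1) = 1 := by
    intro k
    have h := hH ((0 : Fin b → ℝ), 2*k) ((0 : Fin b → ℝ), 1) ⟨k, by ring⟩
    simpa using h
  have odd : ∀ k : ℤ, l (0, 2*k+1) = c := by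
    intro k
    induction k using Int.induction_on with
    | zero => norm_num; rfl
    | succ i hi =>
      have h := rel (i+1)
      have e : 2*((i:ℤ)+1)-1 = 2*(i:ℤ)+1 := by ring
      rw [e, hi] at h
      have := (mul_eq_one_iff_eq_inv₀ cne).mp h
      rw [cinv] at this
      exact this
    | pred i hi =>
      have h := rel (-(i:ℤ))
      have e : 2*(-(i:ℤ))-1 = 2*(-(i:ℤ)-1)+1 := by ring
      rw [e, hi] at h
      rw [(inv_eq_of_mul_eq_one_right h).symm, cinv]
  intro s n
  rcases Int.even_or_odd n with ⟨k, hk⟩ | ⟨k, hk⟩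
  · rw [hone s n ⟨k, hk⟩, hk, show k + k = 2*k by ring, zpow_mul]
    norm_num [show c ^ (2:ℤ) = c * c from zpow_two c, hsq]
  · rw [aux_const l hm hc hH, hk, odd k, zpow_add₀ cne, zpow_mul]
    norm_num [show c ^ (2:ℤ) = c * c from zpow_two c, hsq]

lemma aux_char (l : (Fin b → ℝ) × ℤ → ℂ) (hm : ∀ y, ‖l y‖ = 1)
    (hc : ∀ y, l (-y) = starRingEnd ℂ (l y))
    (hone : ∀ s : Fin b → ℝ, ∀ n : ℤ, Even n → l (s, n) = 1)
    (hH : ∀ u v : (Fin b → ℝ) × ℤ, Even u.2 → l (u + v) * l (u - v) = 1)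
    (hsq : l (0, 1) * l (0, 1) = 1) :
    Continuous l ∧ ∀ y z : (Fin b → ℝ) × ℤ, l (y + z) = l y * l z := by
  have cne : l ((0 : Fin b → ℝ), (1:ℤ)) ≠ 0 := aux_ne l hm _
  have hp := aux_pow l hm hc hone hH hsq
  have hl : l = fun y => l (0, 1) ^ y.2 := funext fun y => hp y.1 y.2
  constructor
  · rw [hl]
    exact (continuous_of_discreteTopology (f := fun n : ℤ => l (0,1) ^ n)).comp continuous_snd
  · intro y z
    have : l (y + z) = l (0,1) ^ (y.2 + z.2) := hp (y + z).1 (y + z).2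
    rw [this, hp y.1 y.2, hp z.1 z.2, zpow_add₀ cne]
end Aux


/-- The automorphism `ε` of `Y = ℝ^b × ℤ` adjoint to an automorphism of `ℝ^b × 𝕋`
restricting to `-I` on `𝕋`:  `ε(s, n) = (α s + n v₀, -n)`. -/
def epsAut {b : ℕ} (α : (Fin b → ℝ) ≃ₗ[ℝ] (Fin b → ℝ)) (v₀ : Fin b → ℝ) :
    (Fin b → ℝ) × ℤ → (Fin b → ℝ) × ℤ :=
  fun y => (α y.1 + y.2 • v₀, -y.2)

/-- **Normalized factors are characters.**  Let `Y = ℝ^b × ℤ` and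
`H = ℝ^b × 2ℤ = Y⁽²⁾`.  Suppose `l₁, l₂ : Y → ℂ` satisfy `|l j (y)| = 1`,
`l j (-y) = conj (l j y)`, `l j ≡ 1` on `H`, and `l j (u+v) l j (u−v) = 1` for all
`u ∈ H`, `v ∈ Y`.  Then `l j (s, n) = l j (0, n)` for all `s ∈ ℝ^b`, `n ∈ ℤ`; and if in
addition `l₁(u+v) l₂(u+εv) = l₁(u) l₁(v) l₂(u) l₂(εv)` for all `u, v ∈ Y`, where
`ε(s, n) = (α s + n v₀, -n)` with `α ∈ Aut(ℝ^b)` and `v₀ ∈ ℝ^b`, then `l₁` and `l₂` are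
(continuous) characters of the group `Y`. -/
theorem normalized_factors_are_characters
    (b : ℕ) (l₁ l₂ : (Fin b → ℝ) × ℤ → ℂ)
    (hmod₁ : ∀ y, ‖l₁ y‖ = 1) (hmod₂ : ∀ y, ‖l₂ y‖ = 1)
    (hconj₁ : ∀ y, l₁ (-y) = starRingEnd ℂ (l₁ y))
    (hconj₂ : ∀ y, l₂ (-y) = starRingEnd ℂ (l₂ y))
    (hone₁ : ∀ s : Fin b → ℝ, ∀ n : ℤ, Even n → l₁ (s, n) = 1)
    (hone₂ : ∀ s : Fin b → ℝ, ∀ n : ℤ, Even n → l₂ (s, n) = 1)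
    (hH₁ : ∀ u v : (Fin b → ℝ) × ℤ, Even u.2 → l₁ (u + v) * l₁ (u - v) = 1)
    (hH₂ : ∀ u v : (Fin b → ℝ) × ℤ, Even u.2 → l₂ (u + v) * l₂ (u - v) = 1)
    (α : (Fin b → ℝ) ≃ₗ[ℝ] (Fin b → ℝ)) (v₀ : Fin b → ℝ) :
    ((∀ s : Fin b → ℝ, ∀ n : ℤ, l₁ (s, n) = l₁ (0, n)) ∧
      (∀ s : Fin b → ℝ, ∀ n : ℤ, l₂ (s, n) = l₂ (0, n))) ∧
    ((∀ u v : (Fin b → ℝ) × ℤ,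
        l₁ (u + v) * l₂ (u + epsAut α v₀ v) =
          l₁ u * l₁ v * l₂ u * l₂ (epsAut α v₀ v)) →
      (Continuous l₁ ∧ ∀ y z : (Fin b → ℝ) × ℤ, l₁ (y + z) = l₁ y * l₁ z) ∧
      (Continuous l₂ ∧ ∀ y z : (Fin b → ℝ) × ℤ, l₂ (y + z) = l₂ y * l₂ z)) := by
  have const₁ := aux_const l₁ hmod₁ hconj₁ hH₁
  have const₂ := aux_const l₂ hmod₂ hconj₂ hH₂
  refine ⟨⟨const₁, const₂⟩, fun hcoc => ?_⟩
  have c₁ne : l₁ ((0 : Fin b → ℝ), (1:ℤ)) ≠ 0 := aux_ne l₁ hmod₁ _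
  have c₂ne : l₂ ((0 : Fin b → ℝ), (1:ℤ)) ≠ 0 := aux_ne l₂ hmod₂ _
  -- values at (0, -1)
  have m₁ : l₁ ((0 : Fin b → ℝ), (-1:ℤ)) = (l₁ (0, 1))⁻¹ := by
    have := hconj₁ ((0 : Fin b → ℝ), (1:ℤ))
    rw [aux_conj_inv l₁ hmod₁] at this
    simpa using this
  have m₂ : l₂ ((0 : Fin b → ℝ), (-1:ℤ)) = (l₂ (0, 1))⁻¹ := by
    have := hconj₂ ((0 : Fin b → ℝ), (1:ℤ))
    rw [aux_conj_inv l₂ hmod₂] at this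
    simpa using this
  -- epsilon values
  have eps1 : epsAut α v₀ ((0 : Fin b → ℝ), (1:ℤ)) = (v₀, -1) := by
    simp [epsAut]
  have epsm1 : epsAut α v₀ ((0 : Fin b → ℝ), (-1:ℤ)) = (-v₀, 1) := by
    simp [epsAut]
  -- first substitution: u = v = (0,1)
  have h1 := hcoc ((0 : Fin b → ℝ), (1:ℤ)) ((0 : Fin b → ℝ), (1:ℤ))
  rw [eps1, show ((0 : Fin b → ℝ), (1:ℤ)) + ((0 : Fin b → ℝ), (1:ℤ)) = ((0 : Fin b → ℝ), (2:ℤ)) by simp,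
    show ((0 : Fin b → ℝ), (1:ℤ)) + (v₀, (-1:ℤ)) = (v₀, (0:ℤ)) by simp,
    hone₁ 0 2 ⟨1, by ring⟩, hone₂ v₀ 0 Even.zero, const₂ v₀ (-1), m₂] at h1
  have hsq₁ : l₁ ((0 : Fin b → ℝ), (1:ℤ)) * l₁ ((0 : Fin b → ℝ), (1:ℤ)) = 1 := by
    field_simp at h1
    linear_combination -h1
  -- second substitution: u = (0,1), v = (0,-1)
  have h2 := hcoc ((0 : Fin b → ℝ), (1:ℤ)) ((0 : Fin b → ℝ), (-1:ℤ))
  rw [epsm1, show ((0 : Fin b → ℝ), (1:ℤ)) + ((0 : Fin b → ℝ), (-1:ℤ)) = ((0 : Fin b → ℝ), (0:ℤ)) by simp,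
    show ((0 : Fin b → ℝ), (1:ℤ)) + (-v₀, (1:ℤ)) = (-v₀, (2:ℤ)) by simp,
    hone₁ 0 0 Even.zero, hone₂ (-v₀) 2 ⟨1, by ring⟩, const₂ (-v₀) 1, m₁] at h2
  have hsq₂ : l₂ ((0 : Fin b → ℝ), (1:ℤ)) * l₂ ((0 : Fin b → ℝ), (1:ℤ)) = 1 := by
    field_simp at h2
    linear_combination -h2
  exact ⟨aux_char l₁ hmod₁ hconj₁ hone₁ hH₁ hsq₁, aux_char l₂ hmod₂ hconj₂ hone₂ hH₂ hsq₂⟩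
end
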